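/- arXiv:1507.03221 — 7 statements merged into one kernel-verified Lean document; each statement's English description precedes it below -/
import Mathlib

section
/- For a finite partially ordered set P with d elements, the chain polytope C(P), defined as the set of points x in ℝ^d with x_i ≥ 0 for all i and x_{i_1} + ... + x_{i_k} ≤ 1 for every chain p_{i_1} < ... < p_{i_k} in P, is a d-dimensional convex polytope whose vertices are exactly the characteristic vectors ρ(A) of antichains A of P. -/
open Set MeasureTheory Pointwise

def IsIdeal {d : ℕ} (P : PartialOrder (Fin d)) (I : Finset (Fin d)) : Prop :=
  ∀ i ∈ I, ∀ j, P.le j i → j ∈ I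

def IsAC {d : ℕ} (P : PartialOrder (Fin d)) (A : Finset (Fin d)) : Prop :=
  ∀ i ∈ A, ∀ j ∈ A, i ≠ j → ¬ P.le i j ∧ ¬ P.le j i

def rho {d : ℕ} (S : Finset (Fin d)) : Fin d → ℝ := fun i => if i ∈ S then 1 else 0

def IsLatticePt {d : ℕ} (x : Fin d → ℝ) : Prop := ∀ i, ∃ z : ℤ, x i = (z : ℝ)

def orderPolytope {d : ℕ} (P : PartialOrder (Fin d)) : Set (Fin d → ℝ) :=
  {x | (∀ i, 0 ≤ x i ∧ x i ≤ 1) ∧ ∀ i j : Fin d, P.le i j → x j ≤ x i}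

def chainPolytope {d : ℕ} (P : PartialOrder (Fin d)) : Set (Fin d → ℝ) :=
  {x | (∀ i, 0 ≤ x i) ∧
    ∀ c : Finset (Fin d), (∀ i ∈ c, ∀ j ∈ c, P.le i j ∨ P.le j i) →
      ∑ i ∈ c, x i ≤ 1}

def idealVerts {d : ℕ} (P : PartialOrder (Fin d)) : Set (Fin d → ℝ) :=
  {x | ∃ I : Finset (Fin d), IsIdeal P I ∧ x = rho I}

def acVerts {d : ℕ} (P : PartialOrder (Fin d)) : Set (Fin d → ℝ) :=
  {x | ∃ A : Finset (Fin d), IsAC P A ∧ x = rho A}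

def GammaOO {d : ℕ} (P Q : PartialOrder (Fin d)) : Set (Fin d → ℝ) :=
  convexHull ℝ (idealVerts P ∪ (fun v => -v) '' idealVerts Q)

def GammaOC {d : ℕ} (P Q : PartialOrder (Fin d)) : Set (Fin d → ℝ) :=
  convexHull ℝ (idealVerts P ∪ (fun v => -v) '' acVerts Q)

def GammaCC {d : ℕ} (P Q : PartialOrder (Fin d)) : Set (Fin d → ℝ) :=
  convexHull ℝ (acVerts P ∪ (fun v => -v) '' acVerts Q)

def IsLinExt {d : ℕ} (P : PartialOrder (Fin d)) (σ : Equiv.Perm (Fin d)) : Prop :=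
  ∀ a b : Fin d, P.lt (σ a) (σ b) → a < b

noncomputable def latCount {d : ℕ} (S : Set (Fin d → ℝ)) : ℕ :=
  Set.ncard {x ∈ S | IsLatticePt x}

def dil {d : ℕ} (n : ℕ) (S : Set (Fin d → ℝ)) : Set (Fin d → ℝ) := (n : ℝ) • S

def UnimodEquiv {d : ℕ} (S T : Set (Fin d → ℝ)) : Prop :=
  ∃ U : Matrix (Fin d) (Fin d) ℤ, IsUnit U.det ∧
    T = (fun v => (U.map (fun z : ℤ => (z : ℝ))).mulVec v) '' S

def IsLatticePolytope {d : ℕ} (S : Set (Fin d → ℝ)) : Prop :=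
  ∃ V : Finset (Fin d → ℝ), (∀ v ∈ V, IsLatticePt v) ∧ S = convexHull ℝ ↑V

def IsFanoPolytope {d : ℕ} (S : Set (Fin d → ℝ)) : Prop :=
  IsLatticePolytope S ∧ affineSpan ℝ S = ⊤ ∧ (0 : Fin d → ℝ) ∈ interior S ∧
    ∀ x ∈ interior S, IsLatticePt x → x = 0

def IsFacet {d : ℕ} (S F : Set (Fin d → ℝ)) : Prop :=
  IsExposed ℝ S F ∧ F.Nonempty ∧ F ≠ S ∧
    ∀ G : Set (Fin d → ℝ), IsExposed ℝ S G → G ≠ S → F ⊆ G → G = F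

def IsZBasisSet {d : ℕ} (B : Set (Fin d → ℝ)) : Prop :=
  B.ncard = d ∧ (∀ x ∈ B, IsLatticePt x) ∧
    ∀ y : Fin d → ℝ, y ∈ Submodule.span ℤ B ↔ IsLatticePt y

def IsSmoothFano {d : ℕ} (S : Set (Fin d → ℝ)) : Prop :=
  IsFanoPolytope S ∧ ∀ F, IsFacet S F → IsZBasisSet (Set.extremePoints ℝ F)

def IsSimplicialPolytope {d : ℕ} (S : Set (Fin d → ℝ)) : Prop :=
  ∀ F : Set (Fin d → ℝ), IsExposed ℝ S F → F ≠ S →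
    ∃ V : Set (Fin d → ℝ), V.Finite ∧
      AffineIndependent ℝ ((↑) : V → (Fin d → ℝ)) ∧ F = convexHull ℝ V

def seg {d : ℕ} (σ : Equiv.Perm (Fin d)) (k : Fin d) : Finset (Fin d) :=
  (Finset.Iic k).image σ

def unitVec (d : ℕ) (a : ℕ) : Fin d → ℝ := fun i => if (i : ℕ) = a then 1 else 0

def pairVec (d : ℕ) (a : ℕ) : Fin d → ℝ :=
  fun i => if (i : ℕ) = a ∨ (i : ℕ) = a + 1 then 1 else 0

def modelSplit (d k l m : ℕ) : Set (Fin d → ℝ) :=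
  convexHull ℝ (
    {x | ∃ i : Fin d, x = unitVec d (i : ℕ) ∨ x = -unitVec d (i : ℕ)} ∪
    {x | ∃ i < k, x = pairVec d (2 * i) ∨ x = -pairVec d (2 * i)} ∪
    {x | ∃ i < l, x = pairVec d (2 * k + 2 * i)} ∪
    {x | ∃ i < m, x = -pairVec d (2 * k + 2 * l + 2 * i)})

def chainOrd (d : ℕ) : PartialOrder (Fin d) := inferInstance

def vOrd (d : ℕ) : PartialOrder (Fin d) where
  le i j := i = j ∨ ((i : ℕ) < (j : ℕ) ∧ 2 ≤ (j : ℕ))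
  lt i j := (i = j ∨ ((i : ℕ) < (j : ℕ) ∧ 2 ≤ (j : ℕ))) ∧
    ¬ (j = i ∨ ((j : ℕ) < (i : ℕ) ∧ 2 ≤ (i : ℕ)))
  lt_iff_le_not_ge i j := Iff.rfl
  le_refl i := Or.inl rfl
  le_trans i j k hij hjk := by
    rcases hij with rfl | ⟨h1, h2⟩
    · exact hjk
    · rcases hjk with rfl | ⟨h3, h4⟩
      · exact Or.inr ⟨h1, h2⟩
      · exact Or.inr ⟨lt_trans h1 h3, h4⟩
  le_antisymm i j hij hji := by
    rcases hij with rfl | ⟨h1, h2⟩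
    · rfl
    · rcases hji with h | ⟨h3, h4⟩
      · exact h.symm
      · exact absurd h3 (by omega)

section Helpers

variable {d : ℕ} (P : PartialOrder (Fin d))

lemma singleton_chain (i : Fin d) : ∀ a ∈ ({i} : Finset (Fin d)), ∀ b ∈ ({i} : Finset (Fin d)),
    P.le a b ∨ P.le b a := by
  intro a ha b hb
  simp only [Finset.mem_singleton] at ha hb
  subst ha; subst hb; exact Or.inl (P.le_refl _)

lemma cp_le_one {x : Fin d → ℝ} (hx : x ∈ chainPolytope P) (i : Fin d) : x i ≤ 1 := by
  have := hx.2 {i} (singleton_chain P i)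
  simpa using this

lemma pair_sum {x : Fin d → ℝ} (hx : x ∈ chainPolytope P) {i a : Fin d} (hia : P.le i a)
    (hne : i ≠ a) : x i + x a ≤ 1 := by
  have hchain : ∀ b ∈ ({i, a} : Finset (Fin d)), ∀ c ∈ ({i, a} : Finset (Fin d)),
      P.le b c ∨ P.le c b := by
    intro b hb c hc
    simp only [Finset.mem_insert, Finset.mem_singleton] at hb hc
    rcases hb with rfl | rfl <;> rcases hc with rfl | rfl
    · exact Or.inl (P.le_refl _)
    · exact Or.inl hia
    · exact Or.inr hia
    · exact Or.inl (P.le_refl _)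
  have := hx.2 {i, a} hchain
  rwa [Finset.sum_pair hne] at this

lemma exists_max_above (s : Finset (Fin d)) :
    ∀ i ∈ s, ∃ j ∈ s, P.le i j ∧ ∀ k ∈ s, P.le j k → j = k := by
  classical
  have key : ∀ n : ℕ, ∀ i ∈ s, (s.filter (fun k => P.le i k ∧ i ≠ k)).card ≤ n →
      ∃ j ∈ s, P.le i j ∧ ∀ k ∈ s, P.le j k → j = k := by
    intro n
    induction n with
    | zero =>
      intro i hi hc
      refine ⟨i, hi, P.le_refl i, fun k hk hik => ?_⟩
      by_contra hne
      have hk' : k ∈ s.filter (fun k => P.le i k ∧ i ≠ k) :=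
        Finset.mem_filter.2 ⟨hk, hik, hne⟩
      rw [Nat.le_zero, Finset.card_eq_zero] at hc
      simp [hc] at hk'
    | succ n ih =>
      intro i hi hc
      by_cases h : ∃ k ∈ s, P.le i k ∧ i ≠ k
      · obtain ⟨k, hk, hik, hne⟩ := h
        have hsub : s.filter (fun m => P.le k m ∧ k ≠ m) ⊆
            (s.filter (fun m => P.le i m ∧ i ≠ m)).erase k := by
          intro m hm
          rw [Finset.mem_filter] at hm
          refine Finset.mem_erase.2 ⟨fun h' => hm.2.2 h'.symm,
            Finset.mem_filter.2 ⟨hm.1, P.le_trans _ _ _ hik hm.2.1, ?_⟩⟩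
          rintro rfl
          exact hne (P.le_antisymm _ _ hik hm.2.1)
        have hcard : (s.filter (fun m => P.le k m ∧ k ≠ m)).card ≤ n := by
          have h1 := Finset.card_le_card hsub
          have h2 : k ∈ s.filter (fun m => P.le i m ∧ i ≠ m) :=
            Finset.mem_filter.2 ⟨hk, hik, hne⟩
          have h3 := Finset.card_erase_of_mem h2
          omega
        obtain ⟨j, hj, hkj, hmax⟩ := ih k hk hcard
        exact ⟨j, hj, P.le_trans _ _ _ hik hkj, hmax⟩
      · push_neg at h
        exact ⟨i, hi, P.le_refl i, h⟩
  intro i hi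
  exact key _ i hi le_rfl

lemma sum_rho (A c : Finset (Fin d)) :
    ∑ i ∈ c, rho A i = ((c.filter (· ∈ A)).card : ℝ) := by
  classical
  simp [rho, Finset.sum_boole, Finset.filter_mem_eq_inter, Finset.inter_comm]

lemma chain_inter_ac {A c : Finset (Fin d)} (hA : IsAC P A)
    (hc : ∀ i ∈ c, ∀ j ∈ c, P.le i j ∨ P.le j i) :
    (c.filter (· ∈ A)).card ≤ 1 := by
  classical
  rw [Finset.card_le_one]
  intro a ha b hb
  rw [Finset.mem_filter] at ha hb
  by_contra hne
  rcases hc a ha.1 b hb.1 with h | h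
  · exact (hA a ha.2 b hb.2 hne).1 h
  · exact (hA a ha.2 b hb.2 hne).2 h

lemma rho_mem_cp {A : Finset (Fin d)} (hA : IsAC P A) : rho A ∈ chainPolytope P := by
  classical
  constructor
  · intro i; unfold rho; split <;> norm_num
  · intro c hc
    rw [sum_rho]
    exact_mod_cast chain_inter_ac P hA hc

lemma convex_cp : Convex ℝ (chainPolytope P) := by
  intro x hx y hy a b ha hb hab
  constructor
  · intro i
    have := hx.1 i; have := hy.1 i
    simp only [Pi.add_apply, Pi.smul_apply, smul_eq_mul]
    nlinarith
  · intro c hc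
    have h1 := hx.2 c hc
    have h2 := hy.2 c hc
    simp only [Pi.add_apply, Pi.smul_apply, smul_eq_mul]
    rw [Finset.sum_add_distrib, ← Finset.mul_sum, ← Finset.mul_sum]
    nlinarith
lemma cp_subset_hull : chainPolytope P ⊆ convexHull ℝ (acVerts P) := by
  classical
  suffices h : ∀ n : ℕ, ∀ x : Fin d → ℝ, x ∈ chainPolytope P →
      (Finset.univ.filter (fun i => x i ≠ 0)).card ≤ n → x ∈ convexHull ℝ (acVerts P) by
    intro x hx; exact h _ x hx le_rfl
  intro n
  induction n with
  | zero =>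
    intro x hx hc
    have hx0 : x = rho (∅ : Finset (Fin d)) := by
      funext i
      rw [Nat.le_zero, Finset.card_eq_zero] at hc
      have : i ∉ Finset.univ.filter (fun i => x i ≠ 0) := by rw [hc]; exact Finset.notMem_empty _
      simp only [Finset.mem_filter, Finset.mem_univ, true_and, not_not] at this
      simp [rho, this]
    exact subset_convexHull ℝ _ ⟨∅, fun i hi => absurd hi (Finset.notMem_empty _), hx0⟩
  | succ n ih =>
    intro x hx hc
    set supp := Finset.univ.filter (fun i => x i ≠ 0) with hsupp
    rcases Finset.eq_empty_or_nonempty supp with hemp | hne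
    · -- x = 0
      have hx0 : x = rho (∅ : Finset (Fin d)) := by
        funext i
        have : i ∉ supp := by rw [hemp]; exact Finset.notMem_empty _
        simp only [hsupp, Finset.mem_filter, Finset.mem_univ, true_and, not_not] at this
        simp [rho, this]
      exact subset_convexHull ℝ _ ⟨∅, fun i hi => absurd hi (Finset.notMem_empty _), hx0⟩
    · set A := supp.filter (fun i => ∀ k ∈ supp, P.le i k → i = k) with hA
      have hAsupp : A ⊆ supp := Finset.filter_subset _ _
      have hpos : ∀ i ∈ supp, 0 < x i := by
        intro i hi
        simp only [hsupp, Finset.mem_filter, Finset.mem_univ, true_and] at hi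
        exact lt_of_le_of_ne (hx.1 i) (Ne.symm hi)
      have habove : ∀ i ∈ supp, ∃ j ∈ A, P.le i j := by
        intro i hi
        obtain ⟨j, hj, hij, hmax⟩ := exists_max_above P supp i hi
        exact ⟨j, Finset.mem_filter.2 ⟨hj, hmax⟩, hij⟩
      have hAC : IsAC P A := by
        intro i hi j hj hne
        rw [hA, Finset.mem_filter] at hi hj
        constructor
        · intro hle; exact hne (hi.2 j (hj.1) hle)
        · intro hle; exact hne.symm (hj.2 i (hi.1) hle)
      have hAne : A.Nonempty := by
        obtain ⟨i, hi⟩ := hne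
        obtain ⟨j, hj, _⟩ := habove i hi
        exact ⟨j, hj⟩
      obtain ⟨i₀, hi₀, hmin⟩ := A.exists_min_image x hAne
      set t := x i₀ with htdef
      have ht0 : 0 < t := hpos i₀ (hAsupp hi₀)
      have ht1 : t ≤ 1 := cp_le_one P hx i₀
      -- key chain bound
      have hkey : ∀ c : Finset (Fin d), (∀ i ∈ c, ∀ j ∈ c, P.le i j ∨ P.le j i) →
          (∀ a ∈ c, a ∉ A) → ∑ i ∈ c, x i ≤ 1 - t := by
        intro c hc hdisj
        set c' := c ∩ supp with hc'
        have hsum : ∑ i ∈ c, x i = ∑ i ∈ c', x i := by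
          refine (Finset.sum_subset Finset.inter_subset_left ?_).symm
          intro i hi hni
          have : i ∉ supp := fun h => hni (Finset.mem_inter.2 ⟨hi, h⟩)
          simp only [hsupp, Finset.mem_filter, Finset.mem_univ, true_and, not_not] at this
          exact this
        rcases Finset.eq_empty_or_nonempty c' with h0 | ⟨m0, hm0⟩
        · rw [hsum, h0, Finset.sum_empty]; linarith
        · obtain ⟨m, hm, _, hmmax⟩ := exists_max_above P c' m0 hm0
          have hmc : m ∈ c := (Finset.mem_inter.1 hm).1
          have hmsupp : m ∈ supp := (Finset.mem_inter.1 hm).2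
          have hlem : ∀ j ∈ c', P.le j m := by
            intro j hj
            rcases hc j (Finset.mem_inter.1 hj).1 m hmc with h | h
            · exact h
            · exact (hmmax j hj h) ▸ P.le_refl _
          obtain ⟨a, haA, hma⟩ := habove m hmsupp
          have hane : a ≠ m := fun h => hdisj m hmc (h ▸ haA)
          have hac' : a ∉ c' := fun h => hdisj a (Finset.mem_inter.1 h).1 haA
          have hchain : ∀ i ∈ insert a c', ∀ j ∈ insert a c', P.le i j ∨ P.le j i := by
            intro i hi j hj
            rcases Finset.mem_insert.1 hi with rfl | hi' <;>
              rcases Finset.mem_insert.1 hj with rfl | hj'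
            · exact Or.inl (P.le_refl _)
            · exact Or.inr (P.le_trans _ _ _ (hlem j hj') hma)
            · exact Or.inl (P.le_trans _ _ _ (hlem i hi') hma)
            · rcases hc i (Finset.mem_inter.1 hi').1 j (Finset.mem_inter.1 hj').1 with h | h
              · exact Or.inl h
              · exact Or.inr h
          have hb := hx.2 (insert a c') hchain
          rw [Finset.sum_insert hac'] at hb
          have hta : t ≤ x a := hmin a haA
          rw [hsum]; linarith
      by_cases ht : 1 ≤ t
      · -- x = rho A
        have hxA : x = rho A := by
          have hA1 : ∀ a ∈ A, x a = 1 := fun a haA =>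
            le_antisymm (cp_le_one P hx a) (le_trans ht (hmin a haA))
          funext i
          by_cases hiA : i ∈ A
          · simp [rho, hiA, hA1 i hiA]
          · have hxi : x i = 0 := by
              by_contra hxi
              have hisupp : i ∈ supp := by
                simp only [hsupp, Finset.mem_filter, Finset.mem_univ, true_and]; exact hxi
              obtain ⟨a, haA, hia⟩ := habove i hisupp
              have hne : i ≠ a := fun h => hiA (h ▸ haA)
              have := pair_sum P hx hia hne
              have := hpos i hisupp
              have := hA1 a haA
              linarith
            simp [rho, hiA, hxi]
        exact subset_convexHull ℝ _ ⟨A, hAC, hxA⟩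
      · push_neg at ht
        set y : Fin d → ℝ := fun i => (1 - t)⁻¹ * (x i - t * rho A i) with hy
        have h1t : (0:ℝ) < 1 - t := by linarith
        have hyCP : y ∈ chainPolytope P := by
          constructor
          · intro i
            rw [hy]
            apply mul_nonneg (le_of_lt (inv_pos.2 h1t))
            by_cases hiA : i ∈ A
            · simp only [rho, hiA, if_pos, mul_one]
              have := hmin i hiA; linarith
            · simp only [rho, hiA, if_neg, not_false_iff, mul_zero, sub_zero]
              exact hx.1 i
          · intro c hc
            have hsum : ∑ i ∈ c, y i = (1 - t)⁻¹ * (∑ i ∈ c, x i - t * ((c.filter (· ∈ A)).card : ℝ)) := by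
              rw [hy]
              rw [← Finset.mul_sum]
              congr 1
              rw [Finset.sum_sub_distrib, ← Finset.mul_sum, sum_rho]
            rw [hsum]
            rw [inv_mul_le_iff₀ h1t, mul_one]
            have hle1 := chain_inter_ac P hAC hc
            rcases Nat.le_one_iff_eq_zero_or_eq_one.1 hle1 with h0 | h1
            · have hdisj : ∀ a ∈ c, a ∉ A := by
                intro a hac haA
                have : a ∈ c.filter (· ∈ A) := Finset.mem_filter.2 ⟨hac, haA⟩
                rw [Finset.card_eq_zero.1 h0] at this
                exact Finset.notMem_empty _ this
              have := hkey c hc hdisj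
              rw [h0]
              push_cast
              linarith
            · have := hx.2 c hc
              rw [h1]
              push_cast
              linarith
        have hyssub : Finset.univ.filter (fun i => y i ≠ 0) ⊆ supp.erase i₀ := by
          intro i hi
          simp only [Finset.mem_filter, Finset.mem_univ, true_and] at hi
          refine Finset.mem_erase.2 ⟨?_, ?_⟩
          · rintro rfl
            apply hi
            rw [hy]
            simp only [rho, hi₀, if_pos, mul_one, ← htdef, sub_self, mul_zero]
          · simp only [hsupp, Finset.mem_filter, Finset.mem_univ, true_and]
            intro hxi
            apply hi
            have hiA : i ∉ A := fun h => (hpos i (hAsupp h)).ne' hxi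
            rw [hy]
            simp [rho, hiA, hxi]
        have hycard : (Finset.univ.filter (fun i => y i ≠ 0)).card ≤ n := by
          have h1 := Finset.card_le_card hyssub
          have h2 := Finset.card_erase_of_mem (hAsupp hi₀)
          omega
        have hyhull := ih y hyCP hycard
        have hrhohull : rho A ∈ convexHull ℝ (acVerts P) :=
          subset_convexHull ℝ _ ⟨A, hAC, rfl⟩
        have hcomb : x = t • rho A + (1 - t) • y := by
          funext i
          simp only [Pi.add_apply, Pi.smul_apply, smul_eq_mul, hy]
          field_simp
          ring
        rw [hcomb]
        exact (convex_convexHull ℝ (acVerts P)) hrhohull hyhull (le_of_lt ht0)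
          (le_of_lt h1t) (by ring)
lemma acVerts_subset_cp : acVerts P ⊆ chainPolytope P := by
  rintro _ ⟨A, hAC, rfl⟩
  exact rho_mem_cp P hAC

lemma cp_eq_hull : chainPolytope P = convexHull ℝ (acVerts P) :=
  Set.Subset.antisymm (cp_subset_hull P)
    (convexHull_min (acVerts_subset_cp P) (convex_cp P))

lemma zero_mem_cp : (0 : Fin d → ℝ) ∈ chainPolytope P :=
  ⟨fun _ => le_refl 0, fun c _ => by simp⟩

lemma single_ac (i : Fin d) : IsAC P {i} := by
  intro a ha b hb hne
  rw [Finset.mem_singleton] at ha hb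
  exact absurd (ha.trans hb.symm) hne

lemma cp_span_top : affineSpan ℝ (chainPolytope P) = ⊤ := by
  rw [AffineSubspace.affineSpan_eq_top_iff_vectorSpan_eq_top_of_nonempty ℝ (Fin d → ℝ) (Fin d → ℝ)
    ⟨0, zero_mem_cp P⟩]
  rw [eq_top_iff, ← (Pi.basisFun ℝ (Fin d)).span_eq]
  apply Submodule.span_le.2
  rintro v ⟨i, rfl⟩
  have hv : (Pi.basisFun ℝ (Fin d)) i = rho ({i} : Finset (Fin d)) -ᵥ (0 : Fin d → ℝ) := by
    funext j
    simp [rho, Pi.basisFun_apply, Pi.single_apply, Finset.mem_singleton, eq_comm]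
  rw [hv]
  exact vsub_mem_vectorSpan ℝ (rho_mem_cp P (single_ac P i)) (zero_mem_cp P)

lemma cp_extreme : Set.extremePoints ℝ (chainPolytope P) = acVerts P := by
  classical
  apply Set.Subset.antisymm
  · rw [cp_eq_hull]
    exact extremePoints_convexHull_subset
  · rintro _ ⟨A, hAC, rfl⟩
    refine ⟨rho_mem_cp P hAC, ?_⟩
    intro x₁ h₁ x₂ h₂ hseg
    set L : (Fin d → ℝ) → ℝ := fun z => ∑ i, (if i ∈ A then z i else -z i) with hL
    have hcardsum : ∑ i : Fin d, (if i ∈ A then (1:ℝ) else 0) = (A.card : ℝ) := by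
      rw [Finset.sum_boole]
      congr 1
      rw [Finset.filter_mem_eq_inter, Finset.univ_inter]
    have hub : ∀ z ∈ chainPolytope P, L z ≤ (A.card : ℝ) := by
      intro z hz
      rw [hL, ← hcardsum]
      apply Finset.sum_le_sum
      intro i _
      split
      · exact cp_le_one P hz i
      · have := hz.1 i; linarith
    have heq : ∀ z ∈ chainPolytope P, L z = (A.card : ℝ) → z = rho A := by
      intro z hz hLz
      have hle' : ∀ i ∈ Finset.univ, (if i ∈ A then z i else -z i) ≤ (if i ∈ A then (1:ℝ) else 0) := by
        intro i _
        split
        · exact cp_le_one P hz i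
        · have := hz.1 i; linarith
      have hterm := (Finset.sum_eq_sum_iff_of_le hle').1 (hLz.trans hcardsum.symm)
      funext i
      have := hterm i (Finset.mem_univ i)
      by_cases hiA : i ∈ A
      · simp only [hiA, if_pos] at this
        simp [rho, hiA, this]
      · simp only [hiA, if_neg, not_false_iff] at this
        simp [rho, hiA]
        linarith
    obtain ⟨a, b, ha, hb, hab, hsum⟩ := hseg
    have hlin : L (a • x₁ + b • x₂) = a * L x₁ + b * L x₂ := by
      simp only [hL, Pi.add_apply, Pi.smul_apply, smul_eq_mul]
      rw [Finset.mul_sum, Finset.mul_sum, ← Finset.sum_add_distrib]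
      apply Finset.sum_congr rfl
      intro i _
      split <;> ring
    have hrhoval : L (rho A) = (A.card : ℝ) := by
      rw [hL, ← hcardsum]
      apply Finset.sum_congr rfl
      intro i _
      split <;> rename_i h <;> simp [rho, h]
    have hcomb : a * L x₁ + b * L x₂ = (A.card : ℝ) := by
      rw [← hlin, hsum, hrhoval]
    have hL1 : L x₁ = (A.card : ℝ) := by
      refine le_antisymm (hub x₁ h₁) ?_
      nlinarith [hub x₂ h₂, mul_le_mul_of_nonneg_left (hub x₂ h₂) hb.le]
    have hL2 : L x₂ = (A.card : ℝ) := by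
      refine le_antisymm (hub x₂ h₂) ?_
      nlinarith [hub x₁ h₁, mul_le_mul_of_nonneg_left (hub x₁ h₁) ha.le]
    exact heq x₁ h₁ hL1

end Helpers

theorem statement1 {d : ℕ} (P : PartialOrder (Fin d)) :
    Convex ℝ (chainPolytope P) ∧
    chainPolytope P = convexHull ℝ (acVerts P) ∧
    affineSpan ℝ (chainPolytope P) = ⊤ ∧
    Set.extremePoints ℝ (chainPolytope P) = acVerts P := by
  exact ⟨convex_cp P, cp_eq_hull P, cp_span_top P, cp_extreme P⟩
end

section
/- For any finite poset P with d elements, the order polytope O(P) and the chain polytope C(P) have the same Ehrhart polynomial: for every positive integer n, |nO(P) ∩ ℤ^d| = |nC(P) ∩ ℤ^d|. -/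
open Set MeasureTheory Pointwise

section Transfer

variable {d : ℕ}

lemma Plt_iff (P : PartialOrder (Fin d)) (a b : Fin d) :
    P.lt a b ↔ P.le a b ∧ ¬ P.le b a := P.lt_iff_le_not_ge a b

lemma Plt_trans {P : PartialOrder (Fin d)} {a b c : Fin d}
    (h1 : P.lt a b) (h2 : P.lt b c) : P.lt a c := by
  rw [Plt_iff] at *
  exact ⟨P.le_trans _ _ _ h1.1 h2.1, fun h => h1.2 (P.le_trans _ _ _ h2.1 h)⟩

lemma Plt_irrefl {P : PartialOrder (Fin d)} {a : Fin d} (h : P.lt a a) : False := by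
  rw [Plt_iff] at h; exact h.2 h.1

lemma Plt_of_le_ne {P : PartialOrder (Fin d)} {a b : Fin d}
    (h : P.le a b) (hne : a ≠ b) : P.lt a b := by
  rw [Plt_iff]
  exact ⟨h, fun h' => hne (P.le_antisymm _ _ h h')⟩

noncomputable def ups (P : PartialOrder (Fin d)) (i : Fin d) : Finset (Fin d) :=
  @Finset.filter _ (fun j => P.lt i j) (Classical.decPred _) Finset.univ

lemma mem_ups {P : PartialOrder (Fin d)} {i j : Fin d} : j ∈ ups P i ↔ P.lt i j := by
  simp [ups]

noncomputable def Mx (P : PartialOrder (Fin d)) (x : Fin d → ℝ) (i : Fin d) : ℝ :=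
  if h : (ups P i).Nonempty then (ups P i).sup' h x else 0

lemma le_Mx {P : PartialOrder (Fin d)} {x : Fin d → ℝ} {i j : Fin d}
    (h : P.lt i j) : x j ≤ Mx P x i := by
  have hj : j ∈ ups P i := mem_ups.2 h
  rw [Mx, dif_pos ⟨j, hj⟩]
  exact Finset.le_sup' x hj

lemma Mx_spec (P : PartialOrder (Fin d)) (x : Fin d → ℝ) (i : Fin d) :
    Mx P x i = 0 ∨ ∃ j, P.lt i j ∧ Mx P x i = x j := by
  by_cases h : (ups P i).Nonempty
  · obtain ⟨j, hj, he⟩ := Finset.exists_mem_eq_sup' h x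
    exact Or.inr ⟨j, mem_ups.1 hj, by rw [Mx, dif_pos h]; exact he⟩
  · exact Or.inl (by rw [Mx, dif_neg h])

lemma Mx_nonneg {P : PartialOrder (Fin d)} {x : Fin d → ℝ}
    (hx : ∀ i, 0 ≤ x i) (i : Fin d) : 0 ≤ Mx P x i := by
  rcases Mx_spec P x i with h | ⟨j, _, h⟩ <;> rw [h]
  exact hx j

lemma Mx_le {P : PartialOrder (Fin d)} {x : Fin d → ℝ}
    (hx : ∀ i, 0 ≤ x i) (hmono : ∀ i j, P.le i j → x j ≤ x i) (i : Fin d) :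
    Mx P x i ≤ x i := by
  rcases Mx_spec P x i with h | ⟨j, hij, h⟩ <;> rw [h]
  · exact hx i
  · exact hmono i j ((Plt_iff P i j).1 hij).1

noncomputable def phi (P : PartialOrder (Fin d)) (x : Fin d → ℝ) : Fin d → ℝ :=
  fun i => x i - Mx P x i

def PChain (P : PartialOrder (Fin d)) (C : Finset (Fin d)) : Prop :=
  ∀ a ∈ C, ∀ b ∈ C, P.le a b ∨ P.le b a

noncomputable def chainsAt (P : PartialOrder (Fin d)) (i : Fin d) :
    Finset (Finset (Fin d)) :=
  @Finset.filter _ (fun C => i ∈ C ∧ (∀ j ∈ C, P.le i j) ∧ PChain P C)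
    (Classical.decPred _) Finset.univ

lemma mem_chainsAt {P : PartialOrder (Fin d)} {i : Fin d} {C : Finset (Fin d)} :
    C ∈ chainsAt P i ↔ i ∈ C ∧ (∀ j ∈ C, P.le i j) ∧ PChain P C := by
  simp [chainsAt]

lemma singleton_mem_chainsAt (P : PartialOrder (Fin d)) (i : Fin d) :
    {i} ∈ chainsAt P i := by
  rw [mem_chainsAt]
  refine ⟨Finset.mem_singleton_self i, ?_, ?_⟩
  · intro j hj
    rcases Finset.mem_singleton.1 hj with rfl
    exact P.le_refl _
  · intro a ha b hb
    rcases Finset.mem_singleton.1 ha with rfl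
    rcases Finset.mem_singleton.1 hb with rfl
    exact Or.inl (P.le_refl _)

lemma chainsAt_nonempty (P : PartialOrder (Fin d)) (i : Fin d) :
    (chainsAt P i).Nonempty := ⟨{i}, singleton_mem_chainsAt P i⟩

lemma insert_chainsAt {P : PartialOrder (Fin d)} {i j : Fin d} (hij : P.lt i j)
    {C : Finset (Fin d)} (hC : C ∈ chainsAt P j) :
    i ∉ C ∧ insert i C ∈ chainsAt P i := by
  rw [mem_chainsAt] at hC
  have hle : P.le i j := ((Plt_iff P i j).1 hij).1
  have hiC : i ∉ C := by
    intro hiC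
    have h := P.le_antisymm _ _ hle (hC.2.1 i hiC)
    rw [h] at hij
    exact Plt_irrefl hij
  have hmin : ∀ k ∈ insert i C, P.le i k := by
    intro k hk
    rcases Finset.mem_insert.1 hk with rfl | h
    · exact P.le_refl _
    · exact P.le_trans _ _ _ hle (hC.2.1 k h)
  refine ⟨hiC, ?_⟩
  rw [mem_chainsAt]
  refine ⟨Finset.mem_insert_self i C, hmin, ?_⟩
  intro a ha b hb
  rcases Finset.mem_insert.1 ha with rfl | h
  · exact Or.inl (hmin b hb)
  · rcases Finset.mem_insert.1 hb with rfl | h'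
    · exact Or.inr (hmin a ha)
    · exact hC.2.2 a h b h'

noncomputable def psi (P : PartialOrder (Fin d)) (y : Fin d → ℝ) : Fin d → ℝ :=
  fun i => (chainsAt P i).sup' (chainsAt_nonempty P i) (fun C => ∑ j ∈ C, y j)

lemma chain_min {P : PartialOrder (Fin d)} :
    ∀ C : Finset (Fin d), PChain P C → C.Nonempty → ∃ m ∈ C, ∀ j ∈ C, P.le m j := by
  intro C
  induction C using Finset.induction_on with
  | empty => intro _ h; exact absurd h (by simp)
  | @insert a s ha ih =>
    intro hC _
    have hs : PChain P s := fun x hx y hy =>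
      hC x (Finset.mem_insert_of_mem hx) y (Finset.mem_insert_of_mem hy)
    rcases s.eq_empty_or_nonempty with rfl | hsne
    · refine ⟨a, Finset.mem_insert_self a _, ?_⟩
      intro j hj
      simp only [Finset.mem_insert, Finset.notMem_empty, or_false] at hj
      rcases hj with rfl
      exact P.le_refl _
    · obtain ⟨m, hm, hmin⟩ := ih hs hsne
      rcases hC a (Finset.mem_insert_self a _) m (Finset.mem_insert_of_mem hm) with
        ham | hma
      · refine ⟨a, Finset.mem_insert_self a _, ?_⟩
        intro j hj
        rcases Finset.mem_insert.1 hj with rfl | hj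
        · exact P.le_refl _
        · exact P.le_trans _ _ _ ham (hmin j hj)
      · refine ⟨m, Finset.mem_insert_of_mem hm, ?_⟩
        intro j hj
        rcases Finset.mem_insert.1 hj with rfl | hj
        · exact hma
        · exact hmin j hj

lemma sum_phi_le {P : PartialOrder (Fin d)} {x : Fin d → ℝ} (hx0 : ∀ i, 0 ≤ x i) :
    ∀ C : Finset (Fin d), PChain P C → ∀ m ∈ C, (∀ j ∈ C, P.le m j) →
      ∑ j ∈ C, phi P x j ≤ x m := by
  intro C
  induction C using Finset.strongInduction with
  | _ C ih =>
    intro hC m hm hmin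
    have hsum : ∑ j ∈ C, phi P x j = phi P x m + ∑ j ∈ C.erase m, phi P x j :=
      (Finset.add_sum_erase C (phi P x) hm).symm
    have herase : ∑ j ∈ C.erase m, phi P x j ≤ Mx P x m := by
      rcases (C.erase m).eq_empty_or_nonempty with he | hne
      · rw [he, Finset.sum_empty]; exact Mx_nonneg hx0 m
      · have hCe : PChain P (C.erase m) := fun a ha b hb =>
          hC a (Finset.mem_of_mem_erase ha) b (Finset.mem_of_mem_erase hb)
        obtain ⟨m', hm', hmin'⟩ := chain_min _ hCe hne
        have hlt : P.lt m m' :=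
          Plt_of_le_ne (hmin m' (Finset.mem_of_mem_erase hm'))
            (Ne.symm (Finset.ne_of_mem_erase hm'))
        have := ih (C.erase m) (Finset.erase_ssubset hm) hCe m' hm' hmin'
        exact this.trans (le_Mx hlt)
    rw [hsum, phi]
    linarith

lemma exists_chain_sum_eq {P : PartialOrder (Fin d)} {x : Fin d → ℝ}
    (i : Fin d) :
    ∃ C ∈ chainsAt P i, ∑ j ∈ C, phi P x j = x i := by
  have wf : WellFounded (fun a b : Fin d => P.lt b a) := by
    haveI : IsTrans (Fin d) (fun a b : Fin d => P.lt b a) :=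
      ⟨fun a b c h1 h2 => Plt_trans h2 h1⟩
    haveI : IsIrrefl (Fin d) (fun a b : Fin d => P.lt b a) := ⟨fun a h => Plt_irrefl h⟩
    exact Finite.wellFounded_of_trans_of_irrefl _
  induction i using WellFounded.induction wf with
  | _ i ih =>
    rcases Mx_spec P x i with hM | ⟨j, hij, hM⟩
    · refine ⟨{i}, singleton_mem_chainsAt P i, ?_⟩
      rw [Finset.sum_singleton, phi, hM, sub_zero]
    · obtain ⟨C, hC, hsum⟩ := ih j hij
      obtain ⟨hiC, hmem⟩ := insert_chainsAt hij hC
      refine ⟨insert i C, hmem, ?_⟩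
      rw [Finset.sum_insert hiC, hsum, phi, hM]
      ring

lemma le_psi_single {P : PartialOrder (Fin d)} (y : Fin d → ℝ) (i : Fin d) :
    y i ≤ psi P y i := by
  have h := Finset.le_sup' (fun C => ∑ j ∈ C, y j) (singleton_mem_chainsAt P i)
  rw [Finset.sum_singleton] at h
  exact h

lemma psi_nonneg {P : PartialOrder (Fin d)} {y : Fin d → ℝ}
    (hy : ∀ i, 0 ≤ y i) (i : Fin d) : 0 ≤ psi P y i :=
  (hy i).trans (le_psi_single y i)

lemma psi_eq {P : PartialOrder (Fin d)} {y : Fin d → ℝ}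
    (hy : ∀ i, 0 ≤ y i) (i : Fin d) :
    psi P y i = y i + Mx P (psi P y) i := by
  apply le_antisymm
  · apply Finset.sup'_le
    intro C hC
    rw [mem_chainsAt] at hC
    have hsum : ∑ j ∈ C, y j = y i + ∑ j ∈ C.erase i, y j :=
      (Finset.add_sum_erase C y hC.1).symm
    rw [hsum]
    rcases (C.erase i).eq_empty_or_nonempty with he | hne
    · rw [he, Finset.sum_empty, add_zero]
      have hMn : 0 ≤ Mx P (psi P y) i := Mx_nonneg (fun j => psi_nonneg hy j) i
      linarith
    · have hCe : PChain P (C.erase i) := fun a ha b hb =>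
        hC.2.2 a (Finset.mem_of_mem_erase ha) b (Finset.mem_of_mem_erase hb)
      obtain ⟨m', hm', hmin'⟩ := chain_min _ hCe hne
      have hlt : P.lt i m' :=
        Plt_of_le_ne (hC.2.1 m' (Finset.mem_of_mem_erase hm'))
          (Ne.symm (Finset.ne_of_mem_erase hm'))
      have h1 : ∑ j ∈ C.erase i, y j ≤ psi P y m' := by
        apply Finset.le_sup' (f := fun C => ∑ j ∈ C, y j)
        rw [mem_chainsAt]
        exact ⟨hm', hmin', hCe⟩
      have h2 : psi P y m' ≤ Mx P (psi P y) i := le_Mx hlt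
      linarith
  · rcases Mx_spec P (psi P y) i with hM | ⟨j, hij, hM⟩
    · rw [hM, add_zero]; exact le_psi_single y i
    · obtain ⟨C, hC, hsum⟩ := Finset.exists_mem_eq_sup' (chainsAt_nonempty P j)
        (fun C => ∑ j ∈ C, y j)
      have hpj : psi P y j = ∑ k ∈ C, y k := hsum
      obtain ⟨hiC, hmem⟩ := insert_chainsAt hij hC
      have h1 : ∑ j ∈ insert i C, y j ≤ psi P y i :=
        Finset.le_sup' (fun C => ∑ j ∈ C, y j) hmem
      rw [Finset.sum_insert hiC] at h1
      rw [hM, hpj]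
      exact h1

lemma phi_psi {P : PartialOrder (Fin d)} {y : Fin d → ℝ}
    (hy : ∀ i, 0 ≤ y i) (i : Fin d) : phi P (psi P y) i = y i := by
  rw [phi, psi_eq hy i]; ring

lemma psi_phi {P : PartialOrder (Fin d)} {x : Fin d → ℝ}
    (hx0 : ∀ i, 0 ≤ x i) (i : Fin d) :
    psi P (phi P x) i = x i := by
  apply le_antisymm
  · apply Finset.sup'_le
    intro C hC
    rw [mem_chainsAt] at hC
    exact sum_phi_le hx0 C hC.2.2 i hC.1 hC.2.1
  · obtain ⟨C, hC, hsum⟩ := exists_chain_sum_eq (P := P) (x := x) i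
    rw [← hsum]
    exact Finset.le_sup' (fun C => ∑ j ∈ C, phi P x j) hC

lemma phi_nonneg {P : PartialOrder (Fin d)} {x : Fin d → ℝ}
    (hx0 : ∀ i, 0 ≤ x i) (hmono : ∀ i j, P.le i j → x j ≤ x i) (i : Fin d) :
    0 ≤ phi P x i := by
  have := Mx_le hx0 hmono i
  rw [phi]; linarith

lemma psi_mono {P : PartialOrder (Fin d)} {y : Fin d → ℝ}
    (hy : ∀ i, 0 ≤ y i) {i j : Fin d} (hij : P.le i j) :
    psi P y j ≤ psi P y i := by
  rcases eq_or_ne i j with rfl | hne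
  · exact le_refl _
  have hlt : P.lt i j := Plt_of_le_ne hij hne
  apply Finset.sup'_le
  intro C hC
  obtain ⟨hiC, hmem⟩ := insert_chainsAt hlt hC
  have h1 : ∑ k ∈ insert i C, y k ≤ psi P y i :=
    Finset.le_sup' (fun C => ∑ j ∈ C, y j) hmem
  rw [Finset.sum_insert hiC] at h1
  have := hy i
  linarith

lemma psi_le {P : PartialOrder (Fin d)} {y : Fin d → ℝ} {n : ℝ}
    (hchain : ∀ c : Finset (Fin d), (∀ i ∈ c, ∀ j ∈ c, P.le i j ∨ P.le j i) →
      ∑ i ∈ c, y i ≤ n) (i : Fin d) : psi P y i ≤ n := by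
  apply Finset.sup'_le
  intro C hC
  rw [mem_chainsAt] at hC
  exact hchain C hC.2.2

lemma lattice_phi {P : PartialOrder (Fin d)} {x : Fin d → ℝ}
    (hx : IsLatticePt x) : IsLatticePt (phi P x) := by
  intro i
  obtain ⟨z, hz⟩ := hx i
  rcases Mx_spec P x i with hM | ⟨j, _, hM⟩
  · exact ⟨z, by rw [phi, hM, sub_zero, hz]⟩
  · obtain ⟨w, hw⟩ := hx j
    exact ⟨z - w, by rw [phi, hM, hz, hw]; push_cast; ring⟩

lemma lattice_psi {P : PartialOrder (Fin d)} {y : Fin d → ℝ}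
    (hy : IsLatticePt y) : IsLatticePt (psi P y) := by
  choose g hg using hy
  intro i
  obtain ⟨C, _, hsum⟩ := Finset.exists_mem_eq_sup' (chainsAt_nonempty P i)
    (fun C => ∑ j ∈ C, y j)
  have hpi : psi P y i = ∑ j ∈ C, y j := hsum
  refine ⟨∑ j ∈ C, g j, ?_⟩
  rw [hpi]
  push_cast
  exact Finset.sum_congr rfl fun j _ => hg j

end Transfer

section Dil

variable {d : ℕ}

lemma mem_dil_order {n : ℕ} (hn : 0 < n) {P : PartialOrder (Fin d)} {x : Fin d → ℝ} :
    x ∈ dil n (orderPolytope P) ↔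
      ((∀ i, 0 ≤ x i ∧ x i ≤ n) ∧ ∀ i j, P.le i j → x j ≤ x i) := by
  have hn' : (0:ℝ) < n := by exact_mod_cast hn
  rw [dil, Set.mem_smul_set_iff_inv_smul_mem₀ (ne_of_gt hn')]
  simp only [orderPolytope, Set.mem_setOf_eq, Pi.smul_apply, smul_eq_mul]
  constructor
  · rintro ⟨h1, h2⟩
    refine ⟨fun i => ⟨?_, ?_⟩, fun i j h => ?_⟩
    · have := (h1 i).1
      nlinarith [inv_pos.2 hn']
    · have := (h1 i).2
      rw [inv_mul_le_iff₀ hn', mul_one] at this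
      exact this
    · have := h2 i j h
      nlinarith [inv_pos.2 hn']
  · rintro ⟨h1, h2⟩
    refine ⟨fun i => ⟨?_, ?_⟩, fun i j h => ?_⟩
    · have := (h1 i).1
      positivity
    · have := (h1 i).2
      rw [inv_mul_le_iff₀ hn']
      linarith
    · have := h2 i j h
      nlinarith [inv_pos.2 hn']

lemma mem_dil_chain {n : ℕ} (hn : 0 < n) {P : PartialOrder (Fin d)} {x : Fin d → ℝ} :
    x ∈ dil n (chainPolytope P) ↔
      ((∀ i, 0 ≤ x i) ∧
        ∀ c : Finset (Fin d), (∀ i ∈ c, ∀ j ∈ c, P.le i j ∨ P.le j i) →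
          ∑ i ∈ c, x i ≤ n) := by
  have hn' : (0:ℝ) < n := by exact_mod_cast hn
  rw [dil, Set.mem_smul_set_iff_inv_smul_mem₀ (ne_of_gt hn')]
  simp only [chainPolytope, Set.mem_setOf_eq, Pi.smul_apply, smul_eq_mul]
  constructor
  · rintro ⟨h1, h2⟩
    refine ⟨fun i => ?_, fun c hc => ?_⟩
    · have := h1 i
      nlinarith [inv_pos.2 hn']
    · have := h2 c hc
      rw [← Finset.mul_sum, inv_mul_le_iff₀ hn', mul_one] at this
      linarith
  · rintro ⟨h1, h2⟩
    refine ⟨fun i => ?_, fun c hc => ?_⟩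
    · have := h1 i
      positivity
    · have := h2 c hc
      rw [← Finset.mul_sum, inv_mul_le_iff₀ hn', mul_one]
      linarith

end Dil

theorem statement2 {d : ℕ} (P : PartialOrder (Fin d)) :
    ∀ n : ℕ, 0 < n →
      latCount (dil n (orderPolytope P)) = latCount (dil n (chainPolytope P)) := by
  intro n hn
  unfold latCount
  set A := {x ∈ dil n (orderPolytope P) | IsLatticePt x} with hA
  set B := {x ∈ dil n (chainPolytope P) | IsLatticePt x} with hB
  have hbij : Set.BijOn (phi P) A B := by
    refine ⟨?_, ?_, ?_⟩
    · rintro x ⟨hx, hlx⟩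
      rw [mem_dil_order hn] at hx
      have hx0 : ∀ i, 0 ≤ x i := fun i => (hx.1 i).1
      refine ⟨(mem_dil_chain hn).2 ⟨phi_nonneg hx0 hx.2, ?_⟩, lattice_phi hlx⟩
      intro c hc
      rcases c.eq_empty_or_nonempty with rfl | hne
      · simp only [Finset.sum_empty]
        positivity
      · obtain ⟨m, hm, hmin⟩ := chain_min c hc hne
        exact (sum_phi_le hx0 c hc m hm hmin).trans (hx.1 m).2
    · rintro x ⟨hx, _⟩ y ⟨hy, _⟩ hxy
      rw [mem_dil_order hn] at hx hy
      funext i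
      rw [← psi_phi (fun i => (hx.1 i).1) i, ← psi_phi (fun i => (hy.1 i).1) i, hxy]
    · rintro y ⟨hy, hly⟩
      rw [mem_dil_chain hn] at hy
      refine ⟨psi P y, ⟨?_, lattice_psi hly⟩, ?_⟩
      · rw [mem_dil_order hn]
        refine ⟨fun i => ⟨psi_nonneg hy.1 i, psi_le hy.2 i⟩, ?_⟩
        intro i j h
        exact psi_mono hy.1 h
      · funext i
        exact phi_psi hy.1 i
  rw [← hbij.image_eq]
  exact (Set.ncard_image_of_injOn hbij.injOn).symm
end

section
/- For any finite poset P with d elements, the Euclidean volume of the order polytope O(P) equals e(P)/d!, where e(P) is the number of linear extensions of P. -/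
open Set MeasureTheory Pointwise

namespace Stmt3Aux

variable {d : ℕ}

/-- The unit cube. -/
def cube (d : ℕ) : Set (Fin d → ℝ) := {x | ∀ i, 0 ≤ x i ∧ x i ≤ 1}

/-- Simplex of points in the cube whose coordinates are antitone along σ. -/
def spx (σ : Equiv.Perm (Fin d)) : Set (Fin d → ℝ) :=
  {x | x ∈ cube d ∧ Antitone (x ∘ σ)}

lemma cube_eq : cube d = Set.pi Set.univ (fun _ : Fin d => Icc (0:ℝ) 1) := by
  ext x; simp [cube, Set.mem_pi, Icc]

lemma volume_cube : volume (cube d) = 1 := by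
  rw [cube_eq, volume_pi_pi]
  simp [Real.volume_Icc]

lemma measurableSet_cube : MeasurableSet (cube d) := by
  rw [cube_eq]
  exact MeasurableSet.univ_pi fun _ => measurableSet_Icc

lemma measurableSet_spx (σ : Equiv.Perm (Fin d)) : MeasurableSet (spx σ) := by
  have h1 : spx σ = cube d ∩ ⋂ (a : Fin d) (b : Fin d) (_ : a ≤ b),
      {x : Fin d → ℝ | x (σ b) ≤ x (σ a)} := by
    ext x
    simp only [spx, Set.mem_inter_iff, Set.mem_iInter, Set.mem_setOf_eq]
    constructor
    · rintro ⟨hc, ha⟩; exact ⟨hc, fun a b hab => ha hab⟩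
    · rintro ⟨hc, ha⟩; exact ⟨hc, fun a b hab => ha a b hab⟩
  rw [h1]
  exact measurableSet_cube.inter <| MeasurableSet.iInter fun a =>
    MeasurableSet.iInter fun b => MeasurableSet.iInter fun _ =>
      measurableSet_le (measurable_pi_apply _) (measurable_pi_apply _)

/-- All simplices have the same volume. -/
lemma volume_spx (σ : Equiv.Perm (Fin d)) :
    volume (spx σ) = volume (spx (1 : Equiv.Perm (Fin d))) := by
  have hmp := MeasureTheory.volume_measurePreserving_piCongrLeft (fun _ : Fin d => ℝ) σ.symm
  have hT : ∀ x : Fin d → ℝ,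
      (MeasurableEquiv.piCongrLeft (fun _ : Fin d => ℝ) σ.symm) x = x ∘ σ := by
    intro x
    funext j
    have h := Equiv.piCongrLeft_apply_apply (fun _ : Fin d => ℝ) σ.symm x (σ j)
    simpa [MeasurableEquiv.coe_piCongrLeft] using h
  have hpre : (MeasurableEquiv.piCongrLeft (fun _ : Fin d => ℝ) σ.symm) ⁻¹'
      (spx (1 : Equiv.Perm (Fin d))) = spx σ := by
    ext x
    simp only [Set.mem_preimage, hT, spx, Set.mem_setOf_eq]
    constructor
    · rintro ⟨hc, ha⟩
      refine ⟨fun i => ?_, by simpa using ha⟩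
      have := hc (σ.symm i); simpa using this
    · rintro ⟨hc, ha⟩
      exact ⟨fun i => hc (σ i), by simpa using ha⟩
  calc volume (spx σ)
      = volume ((MeasurableEquiv.piCongrLeft (fun _ : Fin d => ℝ) σ.symm) ⁻¹'
          (spx (1 : Equiv.Perm (Fin d)))) := by rw [hpre]
    _ = volume (spx (1 : Equiv.Perm (Fin d))) :=
        hmp.measure_preimage (measurableSet_spx _).nullMeasurableSet

/-- Null set of points with two equal coordinates. -/
def diag (d : ℕ) : Set (Fin d → ℝ) :=
  ⋃ (i : Fin d) (j : Fin d) (_ : i ≠ j), {x : Fin d → ℝ | x i = x j}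

lemma volume_diag : volume (diag d) = 0 := by
  refine measure_iUnion_null fun i => measure_iUnion_null fun j => measure_iUnion_null fun hij => ?_
  set φ : (Fin d → ℝ) →ₗ[ℝ] ℝ := (LinearMap.proj i : (Fin d → ℝ) →ₗ[ℝ] ℝ) - (LinearMap.proj j : (Fin d → ℝ) →ₗ[ℝ] ℝ) with hφ
  have hset : {x : Fin d → ℝ | x i = x j} = (LinearMap.ker φ : Set (Fin d → ℝ)) := by
    ext x
    simp [hφ, LinearMap.mem_ker, sub_eq_zero]
  rw [hset]
  refine Measure.addHaar_submodule _ _ ?_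
  intro htop
  have h1 : (Pi.single i 1 : Fin d → ℝ) ∈ LinearMap.ker φ := htop ▸ Submodule.mem_top
  simp [hφ, LinearMap.mem_ker, Pi.single_apply, hij, Ne.symm hij] at h1

lemma not_mem_diag_iff {x : Fin d → ℝ} : x ∉ diag d ↔ Function.Injective x := by
  simp only [diag, Set.mem_iUnion, Set.mem_setOf_eq, not_exists]
  constructor
  · intro h a b hab
    by_contra hne
    exact h a b hne hab
  · intro h a b hne hab
    exact hne (h hab)

lemma spx_inter_subset_diag {σ τ : Equiv.Perm (Fin d)} (hστ : σ ≠ τ) :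
    spx σ ∩ spx τ ⊆ diag d := by
  intro x ⟨hx1, hx2⟩
  by_contra hxd
  have hinj : Function.Injective x := not_mem_diag_iff.mp hxd
  have hs1 : StrictAnti (x ∘ σ) :=
    hx1.2.strictAnti_of_injective (hinj.comp σ.injective)
  have hs2 : StrictAnti (x ∘ τ) :=
    hx2.2.strictAnti_of_injective (hinj.comp τ.injective)
  set π : Fin d → Fin d := fun a => σ.symm (τ a) with hπ
  have hπm : StrictMono π := by
    intro a b hab
    have h1 : (x ∘ τ) b < (x ∘ τ) a := hs2 hab
    have h2 : (x ∘ σ) (π b) < (x ∘ σ) (π a) := by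
      simpa [hπ, Function.comp] using h1
    exact hs1.lt_iff_gt.mp h2
  have hrange : Set.range π = Set.range (id : Fin d → Fin d) := by
    rw [Set.range_id]
    exact Set.range_eq_univ.mpr fun b => ⟨τ.symm (σ b), by simp [hπ]⟩
  haveI : WellFoundedLT (Fin d) := inferInstance
  have hid : π = id := (hπm.range_inj strictMono_id).mp hrange
  apply hστ
  apply Equiv.ext
  intro a
  have h := congrFun hid a
  simp only [hπ, id_eq] at h
  have h2 : τ a = σ a := by have h3 := congrArg σ h; simpa using h3
  exact h2.symm

lemma cube_subset_iUnion : cube d ⊆ ⋃ σ : Equiv.Perm (Fin d), spx σ := by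
  intro x hx
  set σ := Tuple.sort (fun i => -x i) with hσ
  have hmono : Monotone ((fun i => -x i) ∘ σ) := Tuple.monotone_sort _
  refine Set.mem_iUnion.mpr ⟨σ, hx, fun a b hab => ?_⟩
  have := hmono hab
  simp only [Function.comp] at this ⊢
  linarith

lemma pairwiseAEDisjoint :
    Pairwise (Function.onFun (MeasureTheory.AEDisjoint volume) fun σ : Equiv.Perm (Fin d) => spx σ) := by
  intro σ τ hστ
  exact measure_mono_null (spx_inter_subset_diag hστ) volume_diag

lemma volume_spx_one :
    volume (spx (1 : Equiv.Perm (Fin d))) = ((d.factorial : ENNReal))⁻¹ := by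
  have hU : volume (⋃ σ : Equiv.Perm (Fin d), spx σ) =
      ∑' σ : Equiv.Perm (Fin d), volume (spx σ) :=
    measure_iUnion₀ pairwiseAEDisjoint fun σ => (measurableSet_spx σ).nullMeasurableSet
  have hU1 : volume (⋃ σ : Equiv.Perm (Fin d), spx σ) = 1 := by
    refine le_antisymm ?_ ?_
    · have : (⋃ σ : Equiv.Perm (Fin d), spx σ) ⊆ cube d :=
        Set.iUnion_subset fun σ x hx => hx.1
      calc volume (⋃ σ : Equiv.Perm (Fin d), spx σ) ≤ volume (cube d) := measure_mono this
        _ = 1 := volume_cube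
    · calc (1 : ENNReal) = volume (cube d) := volume_cube.symm
        _ ≤ volume (⋃ σ : Equiv.Perm (Fin d), spx σ) := measure_mono cube_subset_iUnion
  have hsum : ∑' σ : Equiv.Perm (Fin d), volume (spx σ) =
      (d.factorial : ENNReal) * volume (spx (1 : Equiv.Perm (Fin d))) := by
    rw [tsum_fintype]
    simp_rw [fun σ => volume_spx σ]
    rw [Finset.sum_const, Finset.card_univ, Fintype.card_perm, Fintype.card_fin,
      nsmul_eq_mul]
  have hkey : (d.factorial : ENNReal) * volume (spx (1 : Equiv.Perm (Fin d))) = 1 := by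
    rw [← hsum, ← hU, hU1]
  exact (ENNReal.eq_inv_of_mul_eq_one_left
    (by rw [mul_comm] at hkey; exact hkey)).symm ▸ rfl

lemma main_aux {d : ℕ} (pLe : Fin d → Fin d → Prop) (hrefl : ∀ i, pLe i i)
    (hantisymm : ∀ i j, pLe i j → pLe j i → i = j) :
    volume {x : Fin d → ℝ | (∀ i, 0 ≤ x i ∧ x i ≤ 1) ∧ ∀ i j : Fin d, pLe i j → x j ≤ x i} =
      (Nat.card {σ : Equiv.Perm (Fin d) //
          ∀ a b : Fin d, pLe (σ a) (σ b) ∧ ¬ pLe (σ b) (σ a) → a < b} : ENNReal) /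
        (Nat.factorial d : ENNReal) := by
  classical
  set OP := {x : Fin d → ℝ | (∀ i, 0 ≤ x i ∧ x i ≤ 1) ∧ ∀ i j : Fin d, pLe i j → x j ≤ x i}
    with hOP
  set LE' := fun σ : Equiv.Perm (Fin d) =>
    ∀ a b : Fin d, pLe (σ a) (σ b) ∧ ¬ pLe (σ b) (σ a) → a < b with hLE'
  have hsub1 : ∀ σ : Equiv.Perm (Fin d), LE' σ → spx σ ⊆ OP := by
    intro σ hσ x hx
    refine ⟨hx.1, fun i j hij => ?_⟩
    by_cases hije : i = j
    · subst hije; exact le_refl _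
    · have hab : σ.symm i < σ.symm j := by
        apply hσ
        constructor
        · simpa using hij
        · simp only [Equiv.apply_symm_apply]
          exact fun h => hije (hantisymm i j hij h)
      have h2 := hx.2 (le_of_lt hab)
      simpa using h2
  have hsub2 : OP ⊆
      (⋃ σ : {σ : Equiv.Perm (Fin d) // LE' σ}, spx σ.1) ∪ diag d := by
    intro x hx
    by_cases hxd : x ∈ diag d
    · exact Or.inr hxd
    · left
      have hinj : Function.Injective x := not_mem_diag_iff.mp hxd
      set σ := Tuple.sort (fun i => -x i) with hσdef
      have hmono : Monotone ((fun i => -x i) ∘ σ) := Tuple.monotone_sort _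
      have hanti : Antitone (x ∘ σ) := by
        intro a b hab
        have := hmono hab
        simp only [Function.comp] at this ⊢
        linarith
      have hle : LE' σ := by
        intro a b hlt
        have hne : σ a ≠ σ b := by
          intro h
          rw [h] at hlt
          exact hlt.2 (hrefl _)
        have hx2 := hx.2 (σ a) (σ b) hlt.1
        have hxne : x (σ b) ≠ x (σ a) := fun h => hne (hinj h).symm
        have hstrict : x (σ b) < x (σ a) := lt_of_le_of_ne hx2 hxne
        by_contra hab
        push_neg at hab
        have := hanti hab
        simp only [Function.comp] at this
        exact absurd hstrict (not_lt.mpr this)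
      exact Set.mem_iUnion.mpr ⟨⟨σ, hle⟩, hx.1, hanti⟩
  have hUv : volume (⋃ σ : {σ : Equiv.Perm (Fin d) // LE' σ}, spx σ.1) =
      (Nat.card {σ : Equiv.Perm (Fin d) // LE' σ} : ENNReal) *
        ((d.factorial : ENNReal))⁻¹ := by
    have hdisj : Pairwise (Function.onFun (MeasureTheory.AEDisjoint volume)
        fun σ : {σ : Equiv.Perm (Fin d) // LE' σ} => spx σ.val) := by
      intro i j hij
      exact pairwiseAEDisjoint fun h => hij (Subtype.ext h)
    rw [measure_iUnion₀ hdisj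
      (fun σ : {σ : Equiv.Perm (Fin d) // LE' σ} =>
        (measurableSet_spx σ.val).nullMeasurableSet)]
    rw [tsum_fintype]
    simp_rw [fun σ : {σ : Equiv.Perm (Fin d) // LE' σ} => volume_spx σ.1]
    rw [volume_spx_one, Finset.sum_const, Finset.card_univ, nsmul_eq_mul,
      Nat.card_eq_fintype_card]
  have hfinal : volume OP =
      volume (⋃ σ : {σ : Equiv.Perm (Fin d) // LE' σ}, spx σ.1) := by
    refine le_antisymm ?_ ?_
    · calc volume OP
          ≤ volume ((⋃ σ : {σ : Equiv.Perm (Fin d) // LE' σ}, spx σ.1) ∪ diag d) :=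
            measure_mono hsub2
        _ ≤ volume (⋃ σ : {σ : Equiv.Perm (Fin d) // LE' σ}, spx σ.1) + volume (diag d) :=
            measure_union_le _ _
        _ = volume (⋃ σ : {σ : Equiv.Perm (Fin d) // LE' σ}, spx σ.1) := by
            rw [volume_diag, add_zero]
    · exact measure_mono (Set.iUnion_subset fun σ => hsub1 σ.1 σ.2)
  rw [hfinal, hUv, div_eq_mul_inv]

end Stmt3Aux


theorem statement3 {d : ℕ} (P : PartialOrder (Fin d)) :
    volume (orderPolytope P) =
      (Nat.card {σ : Equiv.Perm (Fin d) // IsLinExt P σ} : ENNReal) /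
        (Nat.factorial d : ENNReal) := by
  have h := Stmt3Aux.main_aux P.le P.le_refl P.le_antisymm
  have hset : orderPolytope P =
      {x : Fin d → ℝ | (∀ i, 0 ≤ x i ∧ x i ≤ 1) ∧ ∀ i j : Fin d, P.le i j → x j ≤ x i} := rfl
  have hcard : Nat.card {σ : Equiv.Perm (Fin d) //
      ∀ a b : Fin d, P.le (σ a) (σ b) ∧ ¬ P.le (σ b) (σ a) → a < b} =
      Nat.card {σ : Equiv.Perm (Fin d) // IsLinExt P σ} := by
    refine Nat.card_congr (Equiv.subtypeEquivRight fun σ => ?_)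
    constructor
    · intro hσ a b hlt
      exact hσ a b ((P.lt_iff_le_not_ge _ _).mp hlt)
    · intro hσ a b hab
      exact hσ a b ((P.lt_iff_le_not_ge _ _).mpr hab)
  rw [hset, h, hcard]
end

section
/- Let P and Q be finite posets with |P| = |Q| = d. The origin is an interior point of the polytope Γ(O(P), −O(Q)) = conv({ρ(I) : I ∈ J(P)} ∪ {−ρ(J) : J ∈ J(Q)}) if and only if P and Q possess a common linear extension. -/
open Set MeasureTheory Pointwise

namespace St4

variable {d : ℕ}

noncomputable def dot (f x : Fin d → ℝ) : ℝ := ∑ i, f i * x i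

lemma dot_zero_left (x : Fin d → ℝ) : dot 0 x = 0 := by
  simp [dot]

lemma dot_add_left (v w x : Fin d → ℝ) : dot (v + w) x = dot v x + dot w x := by
  simp [dot, add_mul, Finset.sum_add_distrib]

noncomputable def delta (a b : Fin d) : Fin d → ℝ :=
  fun i => (if i = a then 1 else 0) - (if i = b then 1 else 0)

lemma dot_delta (a b : Fin d) (x : Fin d → ℝ) : dot (delta a b) x = x a - x b := by
  simp [dot, delta, sub_mul, Finset.sum_sub_distrib, ite_mul]

lemma plt_le {P : PartialOrder (Fin d)} {a b : Fin d} (h : P.lt a b) :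
    P.le a b ∧ a ≠ b := by
  have h' := (@lt_iff_le_not_ge (Fin d) P.toPreorder a b).mp h
  refine ⟨h'.1, ?_⟩
  rintro rfl
  exact h'.2 h'.1

lemma le_plt {P : PartialOrder (Fin d)} {a b : Fin d} (h1 : P.le a b) (h2 : a ≠ b) :
    P.lt a b := by
  refine (@lt_iff_le_not_ge (Fin d) P.toPreorder a b).mpr ⟨h1, fun h3 => ?_⟩
  exact h2 (P.le_antisymm a b h1 h3)

lemma plt_trans {P : PartialOrder (Fin d)} {a b c : Fin d}
    (h1 : P.lt a b) (h2 : P.lt b c) : P.lt a c :=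
  @lt_trans (Fin d) P.toPreorder a b c h1 h2

noncomputable def qh (Q : PartialOrder (Fin d)) : Fin d → ℝ :=
  fun i => ((@Finset.filter (Fin d) (fun j => Q.lt j i) (Classical.decPred _)
    Finset.univ).card : ℝ)

lemma qh_lt {Q : PartialOrder (Fin d)} {a b : Fin d} (h : Q.lt a b) :
    qh Q a < qh Q b := by
  classical
  have hsub : (@Finset.filter (Fin d) (fun j => Q.lt j a) (Classical.decPred _)
      Finset.univ) ⊂ (@Finset.filter (Fin d) (fun j => Q.lt j b) (Classical.decPred _)
      Finset.univ) := by
    constructor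
    · intro j hj
      simp only [Finset.mem_filter, Finset.mem_univ, true_and] at hj ⊢
      exact plt_trans hj h
    · intro hcon
      have ha : a ∈ (@Finset.filter (Fin d) (fun j => Q.lt j b) (Classical.decPred _)
          Finset.univ) := by
        simp only [Finset.mem_filter, Finset.mem_univ, true_and]
        exact h
      have := hcon ha
      simp only [Finset.mem_filter, Finset.mem_univ, true_and] at this
      exact (plt_le this).2 rfl
  unfold qh
  exact_mod_cast Finset.card_lt_card hsub

lemma rho_nonneg (S : Finset (Fin d)) (i : Fin d) : 0 ≤ rho S i := by
  unfold rho; split <;> norm_num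

lemma ideal_mono {P : PartialOrder (Fin d)} {I : Finset (Fin d)} (hI : IsIdeal P I)
    {a b : Fin d} (h : P.le a b) : rho I b - rho I a ≤ 0 := by
  by_cases hb : b ∈ I
  · have ha : a ∈ I := hI b hb a h
    simp [rho, ha, hb]
  · have : rho I b = 0 := by simp [rho, hb]
    rw [this]
    have := rho_nonneg I a
    linarith

lemma dot_neg_right (f x : Fin d → ℝ) : dot f (-x) = -(dot f x) := by
  simp [dot, mul_neg, Finset.sum_neg_distrib]

lemma dot_add_right (f v w : Fin d → ℝ) : dot f (v + w) = dot f v + dot f w := by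
  simp [dot, mul_add, Finset.sum_add_distrib]

lemma dot_smul_right (f : Fin d → ℝ) (c : ℝ) (x : Fin d → ℝ) :
    dot f (c • x) = c * dot f x := by
  simp [dot, Finset.mul_sum]
  apply Finset.sum_congr rfl
  intro i _
  ring

lemma dot_self_pos {f : Fin d → ℝ} (hf : f ≠ 0) : 0 < dot f f := by
  obtain ⟨i, hi⟩ := Function.ne_iff.mp hf
  refine Finset.sum_pos' (fun j _ => mul_self_nonneg (f j)) ⟨i, Finset.mem_univ i, ?_⟩
  exact mul_self_pos.mpr (by simpa using hi)

lemma cycle_functional (P Q : PartialOrder (Fin d)) (a : Fin d)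
    (h : Relation.TransGen (fun x y => P.lt x y ∨ Q.lt x y) a a) :
    ∃ f : Fin d → ℝ, f ≠ 0 ∧ (∀ I, IsIdeal P I → dot f (rho I) ≤ 0) ∧
      (∀ J, IsIdeal Q J → 0 ≤ dot f (rho J)) := by
  set r : Fin d → Fin d → Prop := fun x y => P.lt x y ∨ Q.lt x y with hr
  have step : ∀ x y : Fin d, r x y → ∃ v : Fin d → ℝ,
      (∀ I, IsIdeal P I → dot v (rho I) ≤ rho I x - rho I y) ∧
      (∀ J, IsIdeal Q J → 0 ≤ dot v (rho J)) ∧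
      dot v (qh Q) ≤ 0 ∧ (P.lt x y ∨ dot v (qh Q) < 0) := by
    rintro x y (hP | hQ)
    · refine ⟨0, ?_, ?_, ?_, Or.inl hP⟩
      · intro I hI
        rw [dot_zero_left]
        have := ideal_mono hI (plt_le hP).1
        linarith
      · intro J _; rw [dot_zero_left]
      · rw [dot_zero_left]
    · refine ⟨delta x y, ?_, ?_, ?_, ?_⟩
      · intro I _; rw [dot_delta]
      · intro J hJ; rw [dot_delta]
        have := ideal_mono hJ (plt_le hQ).1
        linarith
      · rw [dot_delta]; have := qh_lt hQ; linarith
      · right; rw [dot_delta]; have := qh_lt hQ; linarith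
  have main : ∀ b : Fin d, Relation.TransGen r a b → ∃ v : Fin d → ℝ,
      (∀ I, IsIdeal P I → dot v (rho I) ≤ rho I a - rho I b) ∧
      (∀ J, IsIdeal Q J → 0 ≤ dot v (rho J)) ∧
      dot v (qh Q) ≤ 0 ∧ (P.lt a b ∨ dot v (qh Q) < 0) := by
    intro b hb
    induction hb with
    | single h1 => exact step _ _ h1
    | tail h1 h2 ih =>
      obtain ⟨v1, A1, B1, C1, D1⟩ := ih
      obtain ⟨v2, A2, B2, C2, D2⟩ := step _ _ h2
      refine ⟨v1 + v2, ?_, ?_, ?_, ?_⟩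
      · intro I hI; rw [dot_add_left]
        have a1 := A1 I hI; have a2 := A2 I hI; linarith
      · intro J hJ; rw [dot_add_left]
        have b1 := B1 J hJ; have b2 := B2 J hJ; linarith
      · rw [dot_add_left]; linarith
      · rw [dot_add_left]
        rcases D1 with hp1 | hn1
        · rcases D2 with hp2 | hn2
          · exact Or.inl (plt_trans hp1 hp2)
          · exact Or.inr (by linarith)
        · exact Or.inr (by linarith)
  obtain ⟨v, A, B, C, D⟩ := main a h
  have hne : v ≠ 0 := by
    rcases D with hp | hn
    · exact absurd rfl (plt_le hp).2
    · intro hv; rw [hv, dot_zero_left] at hn; linarith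
  refine ⟨v, hne, fun I hI => ?_, B⟩
  have := A I hI; linarith

lemma not_interior_of_functional (P Q : PartialOrder (Fin d))
    (f : Fin d → ℝ) (hne : f ≠ 0)
    (hP : ∀ I, IsIdeal P I → dot f (rho I) ≤ 0)
    (hQ : ∀ J, IsIdeal Q J → 0 ≤ dot f (rho J)) :
    (0 : Fin d → ℝ) ∉ interior (GammaOO P Q) := by
  intro h0
  have hsub : GammaOO P Q ⊆ {x | dot f x ≤ 0} := by
    apply convexHull_min
    · rintro x (⟨I, hI, rfl⟩ | ⟨y, ⟨J, hJ, rfl⟩, rfl⟩)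
      · exact hP I hI
      · show dot f (-(rho J)) ≤ 0
        rw [dot_neg_right]
        have := hQ J hJ; linarith
    · exact convex_halfSpace_le
        ⟨fun u w => dot_add_right f u w, fun c u => dot_smul_right f c u⟩ 0
  rw [mem_interior_iff_mem_nhds, Metric.mem_nhds_iff] at h0
  obtain ⟨ε, hε, hball⟩ := h0
  have hfpos : (0:ℝ) < ‖f‖ := norm_pos_iff.mpr hne
  set t : ℝ := ε / (2 * ‖f‖) with ht
  have htpos : 0 < t := by positivity
  have hmem : t • f ∈ Metric.ball (0 : Fin d → ℝ) ε := by
    rw [mem_ball_zero_iff, norm_smul, Real.norm_eq_abs, abs_of_pos htpos, ht]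
    rw [div_mul_eq_mul_div, mul_comm]
    rw [mul_comm (2:ℝ) ‖f‖, ← div_div]
    calc ‖f‖ * ε / ‖f‖ / 2 = ε / 2 := by
          rw [mul_comm, mul_div_assoc, div_self (ne_of_gt hfpos), mul_one]
      _ < ε := by linarith
  have hle : dot f (t • f) ≤ 0 := hsub (hball hmem)
  rw [dot_smul_right] at hle
  have := dot_self_pos hne
  nlinarith

lemma exists_common_ext (P Q : PartialOrder (Fin d))
    (hac : ∀ a : Fin d, ¬ Relation.TransGen (fun x y => P.lt x y ∨ Q.lt x y) a a) :
    ∃ σ : Equiv.Perm (Fin d), IsLinExt P σ ∧ IsLinExt Q σ := by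
  set r : Fin d → Fin d → Prop :=
    fun x y => Relation.TransGen (fun x y => P.lt x y ∨ Q.lt x y) x y with hrdef
  let r' : Fin d → Fin d → Prop := fun a b => r a b ∨ a = b
  haveI hpo : IsPartialOrder (Fin d) r' :=
    { refl := fun a => Or.inr rfl
      trans := by
        rintro a b c (hab | rfl) (hbc | rfl)
        · exact Or.inl (hab.trans hbc)
        · exact Or.inl hab
        · exact Or.inl hbc
        · exact Or.inr rfl
      antisymm := by
        rintro a b (hab | rfl) (hba | hba)
        · exact absurd (hab.trans hba) (hac a)
        · exact hba.symm
        · rfl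
        · rfl }
  obtain ⟨s, hlin, hrs⟩ := extend_partialOrder r'
  haveI := hlin
  let ts : Fin d → Fin d → Prop := fun a b => s a b ∧ a ≠ b
  haveI hsto : IsStrictTotalOrder (Fin d) ts :=
    { trichotomous := by
        intro a b hn1 hn2
        by_contra hab
        rcases Std.Total.total (r := s) a b with h | h
        · exact hn1 ⟨h, hab⟩
        · exact hn2 ⟨h, fun hc => hab hc.symm⟩
      irrefl := fun a h => h.2 rfl
      trans := by
        rintro a b c ⟨h1, h2⟩ ⟨h3, h4⟩
        refine ⟨IsTrans.trans a b c h1 h3, fun hac' => ?_⟩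
        subst hac'
        exact h2 (Std.Antisymm.antisymm _ _ h1 h3) }
  letI dects : DecidableRel ts := Classical.decRel ts
  letI L : LinearOrder (Fin d) := linearOrderOfSTO ts
  let e := monoEquivOfFin (Fin d) (Fintype.card_fin d)
  refine ⟨e.toEquiv, ?_, ?_⟩
  all_goals {
    intro a b hlt
    have hs : s (e.toEquiv a) (e.toEquiv b) :=
      hrs _ _ (Or.inl (Relation.TransGen.single (by tauto)))
    have hne : (e.toEquiv a : Fin d) ≠ e.toEquiv b := by
      intro hcon
      exact (plt_le hlt).2 hcon
    by_contra hab
    have hba : b ≤ a := Fin.not_lt.mp hab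
    have hL : L.le (e.toEquiv b) (e.toEquiv a) := e.map_rel_iff'.mpr hba
    have hL' : (e.toEquiv b = e.toEquiv a) ∨ ts (e.toEquiv b) (e.toEquiv a) := hL
    rcases hL' with hceq | ⟨hsba, _⟩
    · exact hne hceq.symm
    · exact hne (Std.Antisymm.antisymm _ _ hs hsba) }

lemma mem_seg {σ : Equiv.Perm (Fin d)} {k i : Fin d} :
    i ∈ seg σ k ↔ σ.symm i ≤ k := by
  rw [seg, Finset.mem_image]
  constructor
  · rintro ⟨a, ha, rfl⟩
    rw [σ.symm_apply_apply]
    exact Finset.mem_Iic.mp ha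
  · intro h
    exact ⟨σ.symm i, Finset.mem_Iic.mpr h, σ.apply_symm_apply i⟩

lemma seg_isIdeal {P : PartialOrder (Fin d)} {σ : Equiv.Perm (Fin d)}
    (hσ : IsLinExt P σ) (k : Fin d) : IsIdeal P (seg σ k) := by
  intro i hi j hle
  rw [mem_seg] at hi ⊢
  by_cases hji : j = i
  · subst hji; exact hi
  · have hlt : P.lt j i := le_plt hle hji
    have h2 := hσ (σ.symm j) (σ.symm i)
      (by rwa [Equiv.apply_symm_apply, Equiv.apply_symm_apply])
    have h2' := Fin.lt_def.mp h2
    have hi' := Fin.le_def.mp hi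
    rw [Fin.le_def]
    omega

lemma interior_of_common (P Q : PartialOrder (Fin d)) (σ : Equiv.Perm (Fin d))
    (hP : IsLinExt P σ) (hQ : IsLinExt Q σ) :
    (0 : Fin d → ℝ) ∈ interior (GammaOO P Q) := by
  set S := idealVerts P ∪ (fun v => -v) '' idealVerts Q with hS
  set r : ℝ := 1 / (2 * d + 2) with hrdef
  have hrpos : 0 < r := by positivity
  rw [mem_interior]
  refine ⟨Metric.ball 0 r, ?_, Metric.isOpen_ball, Metric.mem_ball_self hrpos⟩
  intro x hx
  have hxnorm : ‖x‖ < r := by rwa [mem_ball_zero_iff] at hx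
  set g : ℕ → ℝ := fun n => if h : n < d then x (σ ⟨n, h⟩) else 0 with hg
  set c : Fin d → ℝ := fun k => g (k : ℕ) - g ((k : ℕ) + 1) with hc
  set v : Fin d → (Fin d → ℝ) := fun k => rho (seg σ k) with hv
  have hgnorm : ∀ n, |g n| ≤ ‖x‖ := by
    intro n
    rw [hg]
    dsimp only
    split
    · calc |x (σ _)| = ‖x (σ _)‖ := (Real.norm_eq_abs _).symm
        _ ≤ ‖x‖ := norm_le_pi_norm x _
    · simp only [abs_zero]
      exact norm_nonneg x
  have hcbound : ∀ k : Fin d, |c k| ≤ 2 * ‖x‖ := by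
    intro k
    have h1 := hgnorm (k : ℕ)
    have h2 := hgnorm ((k : ℕ) + 1)
    have h3 : |c k| ≤ |g (k : ℕ)| + |g ((k : ℕ) + 1)| := abs_sub _ _
    linarith
  set W : ℝ := ∑ k : Fin d, |c k| with hW
  have hWnonneg : 0 ≤ W := Finset.sum_nonneg fun k _ => abs_nonneg _
  have hW1 : W ≤ 1 := by
    have hb : W ≤ (d : ℝ) * (2 * ‖x‖) := by
      calc W ≤ ∑ _k : Fin d, 2 * ‖x‖ := Finset.sum_le_sum fun k _ => hcbound k
        _ = (d : ℝ) * (2 * ‖x‖) := by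
            rw [Finset.sum_const, Finset.card_univ, Fintype.card_fin, nsmul_eq_mul]
    have hx' : ‖x‖ ≤ r := le_of_lt hxnorm
    have hb2 : (d : ℝ) * (2 * ‖x‖) ≤ (d : ℝ) * (2 * r) := by
      apply mul_le_mul_of_nonneg_left _ (Nat.cast_nonneg d)
      linarith
    have h2d : (0:ℝ) < 2 * d + 2 := by positivity
    have heq : (d : ℝ) * (2 * r) = (2 * d) / (2 * d + 2) := by
      rw [hrdef]; ring
    have hle1 : (d : ℝ) * (2 * r) ≤ 1 := by
      rw [heq, div_le_one h2d]; linarith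
    linarith
  -- rho of segments
  have hvki : ∀ (k i : Fin d), v k i =
      if ((σ.symm i : ℕ) ≤ (k : ℕ)) then (1:ℝ) else 0 := by
    intro k i
    rw [hv]
    dsimp only
    unfold rho
    by_cases h : ((σ.symm i : ℕ) ≤ (k : ℕ))
    · rw [if_pos h, if_pos (mem_seg.mpr (Fin.le_def.mpr h))]
    · rw [if_neg h, if_neg]
      intro hmem
      exact h (Fin.le_def.mp (mem_seg.mp hmem))
  have hsum : ∑ k : Fin d, c k • v k = x := by
    funext i
    rw [Finset.sum_apply]
    set j : ℕ := (σ.symm i : ℕ) with hj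
    have hjd : j < d := (σ.symm i).isLt
    set N : ℕ → ℝ := fun n => (g n - g (n + 1)) * (if j ≤ n then 1 else 0) with hN
    set H : ℕ → ℝ := fun n => g (max n j) with hH
    have step1 : ∀ k : Fin d, (c k • v k) i = N (k : ℕ) := by
      intro k
      rw [Pi.smul_apply, smul_eq_mul, hvki k i]
    have step2 : ∑ k : Fin d, (c k • v k) i = ∑ n ∈ Finset.range d, N n := by
      rw [← Fin.sum_univ_eq_sum_range N d]
      exact Finset.sum_congr rfl fun k _ => step1 k
    have hNH : ∀ n, N n = H n - H (n + 1) := by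
      intro n
      rw [hN, hH]
      dsimp only
      by_cases h : j ≤ n
      · rw [if_pos h, max_eq_left h, max_eq_left (by omega), mul_one]
      · rw [if_neg h, max_eq_right (by omega), max_eq_right (by omega), mul_zero,
          sub_self]
    have step3 : ∑ n ∈ Finset.range d, N n = H 0 - H d := by
      calc ∑ n ∈ Finset.range d, N n = ∑ n ∈ Finset.range d, (H n - H (n+1)) :=
            Finset.sum_congr rfl fun n _ => hNH n
        _ = H 0 - H d := Finset.sum_range_sub' H d
    have hH0 : H 0 = x i := by
      rw [hH]
      dsimp only
      rw [max_eq_right (Nat.zero_le j), hg]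
      dsimp only
      rw [dif_pos hjd]
      have hji' : (⟨j, hjd⟩ : Fin d) = σ.symm i := Fin.eta _ _
      rw [hji', σ.apply_symm_apply]
    have hHd : H d = 0 := by
      rw [hH]
      dsimp only
      rw [max_eq_left (le_of_lt hjd), hg]
      dsimp only
      rw [dif_neg (lt_irrefl d)]
    rw [step2, step3, hH0, hHd, sub_zero]
  -- membership facts
  have hmem0 : (0 : Fin d → ℝ) ∈ S := by
    rw [hS]
    left
    refine ⟨∅, ?_, ?_⟩
    · intro i hi
      exact absurd hi (Finset.notMem_empty i)
    · funext i; simp [rho]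
  have hmemv : ∀ k, v k ∈ S := by
    intro k; rw [hS]; left; exact ⟨seg σ k, seg_isIdeal hP k, rfl⟩
  have hmemnv : ∀ k, -(v k) ∈ S := by
    intro k; rw [hS]; right
    exact ⟨v k, ⟨seg σ k, seg_isIdeal hQ k, rfl⟩, rfl⟩
  -- convex combination
  set w : Option (Fin d) → ℝ := fun o => o.elim (1 - W) (fun k => |c k|) with hw
  set z : Option (Fin d) → (Fin d → ℝ) :=
    fun o => o.elim 0 (fun k => if 0 ≤ c k then v k else -(v k)) with hz
  have hcomb : ∑ o : Option (Fin d), w o • z o ∈ convexHull ℝ S := by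
    apply (convex_convexHull ℝ S).sum_mem
    · rintro (_ | k) _
      · show 0 ≤ 1 - W; linarith
      · exact abs_nonneg _
    · rw [Fintype.sum_option]
      show (1 - W) + ∑ k : Fin d, |c k| = 1
      rw [← hW]; ring
    · rintro (_ | k) _
      · exact subset_convexHull ℝ S hmem0
      · show (if 0 ≤ c k then v k else -(v k)) ∈ convexHull ℝ S
        split
        · exact subset_convexHull ℝ S (hmemv k)
        · exact subset_convexHull ℝ S (hmemnv k)
  have heq2 : ∑ o : Option (Fin d), w o • z o = x := by
    rw [Fintype.sum_option]
    have h0 : w none • z none = 0 := by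
      show (1 - W) • (0 : Fin d → ℝ) = 0
      rw [smul_zero]
    rw [h0, zero_add]
    calc ∑ k : Fin d, w (some k) • z (some k) = ∑ k : Fin d, c k • v k := by
          apply Finset.sum_congr rfl
          intro k _
          show |c k| • (if 0 ≤ c k then v k else -(v k)) = c k • v k
          by_cases h : 0 ≤ c k
          · rw [if_pos h, abs_of_nonneg h]
          · rw [if_neg h, abs_of_neg (lt_of_not_ge h), smul_neg, neg_smul, neg_neg]
      _ = x := hsum
  rw [← heq2]
  exact hcomb

end St4

theorem statement4 {d : ℕ} (P Q : PartialOrder (Fin d)) :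
    (0 : Fin d → ℝ) ∈ interior (GammaOO P Q) ↔
      ∃ σ : Equiv.Perm (Fin d), IsLinExt P σ ∧ IsLinExt Q σ := by
  constructor
  · intro h0
    by_contra hno
    have hcyc : ∃ a : Fin d, Relation.TransGen (fun x y => P.lt x y ∨ Q.lt x y) a a := by
      by_contra hnc
      push_neg at hnc
      exact hno (St4.exists_common_ext P Q hnc)
    obtain ⟨a, ha⟩ := hcyc
    obtain ⟨f, hne, hPf, hQf⟩ := St4.cycle_functional P Q a ha
    exact St4.not_interior_of_functional P Q f hne hPf hQf h0
  · rintro ⟨σ, hPσ, hQσ⟩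
    exact St4.interior_of_common P Q σ hPσ hQσ
end

section
/- Let P and Q be finite posets with |P| = |Q| = d. The origin of ℝ^d is an interior point of the polytope Γ(O(P), −C(Q)) = conv({ρ(I) : I ∈ J(P)} ∪ {−ρ(A) : A ∈ A(Q)}), and Γ(O(P), −C(Q)) has dimension d. -/
open Set MeasureTheory Pointwise

theorem statement5 {d : ℕ} (P Q : PartialOrder (Fin d)) :
    (0 : Fin d → ℝ) ∈ interior (GammaOC P Q) ∧
    affineSpan ℝ (GammaOC P Q) = ⊤ := by
  set S : Set (Fin d → ℝ) := idealVerts P ∪ (fun v => -v) '' acVerts Q with hS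
  set ε : ℝ := (2 * (d + 1) : ℝ)⁻¹ with hεdef
  have hε : 0 < ε := by positivity
  have hsub : Metric.ball (0 : Fin d → ℝ) ε ⊆ GammaOC P Q := by
    intro x hx
    have hxi : ∀ i, |x i| < ε := by
      intro i
      simp only [Metric.mem_ball, dist_zero_right] at hx
      calc |x i| = ‖x i‖ := rfl
        _ ≤ ‖x‖ := norm_le_pi_norm x i
        _ < ε := hx
    classical
    set w : Fin d ⊕ Bool → ℝ := fun t => match t with
      | .inl i => ε - x i
      | .inr true => ε
      | .inr false => 1 - ε - ∑ i, (ε - x i) with hw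
    set z : Fin d ⊕ Bool → (Fin d → ℝ) := fun t => match t with
      | .inl i => -(rho {i})
      | .inr true => rho Finset.univ
      | .inr false => rho (∅ : Finset (Fin d)) with hz
    have hsum : ∑ t, w t = 1 := by
      rw [Fintype.sum_sum_type]
      simp [hw, Fintype.sum_bool]
      ring
    have hwnn : ∀ t ∈ Finset.univ, 0 ≤ w t := by
      rintro (i | b) -
      · have := hxi i
        have : x i < ε := lt_of_le_of_lt (le_abs_self _) this
        simp [hw]
        linarith
      · cases b
        · have hle : ∑ i, (ε - x i) ≤ ∑ _i : Fin d, 2 * ε := by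
            apply Finset.sum_le_sum
            intro i _
            have := hxi i
            have : -x i ≤ |x i| := neg_le_abs _
            linarith
          simp only [Finset.sum_const, Finset.card_univ, Fintype.card_fin,
            nsmul_eq_mul] at hle
          have h1 : ε * (2 * d + 1) ≤ 1 := by
            rw [hεdef]
            rw [inv_mul_le_iff₀ (by positivity)]
            push_cast
            nlinarith
          simp only [hw]
          push_cast at h1 ⊢
          nlinarith
        · simp [hw]
          exact hε.le
    have hzmem : ∀ t ∈ Finset.univ, z t ∈ S := by
      rintro (i | b) -
      · refine Or.inr ⟨rho {i}, ⟨({i} : Finset (Fin d)), ?_, rfl⟩, rfl⟩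
        intro a ha b hb hab
        simp only [Finset.mem_singleton] at ha hb
        exact absurd (ha.trans hb.symm) hab
      · cases b
        · exact Or.inl ⟨(∅ : Finset (Fin d)), by intro i hi; simp at hi, rfl⟩
        · exact Or.inl ⟨Finset.univ, by intro i _ j _; simp, rfl⟩
    have hx_eq : Finset.univ.centerMass w z = x := by
      rw [Finset.centerMass, hsum, inv_one, one_smul]
      funext j
      rw [Fintype.sum_apply, Fintype.sum_sum_type]
      simp only [hw, hz, Pi.smul_apply, smul_eq_mul, Fintype.sum_bool, rho,
        Finset.mem_singleton, Finset.mem_univ, Finset.notMem_empty,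
        if_true, if_false, Pi.neg_apply]
      rw [Finset.sum_congr rfl (fun i _ => by
        show (ε - x i) * -(if j = i then (1:ℝ) else 0) =
          (if j = i then -(ε - x i) else 0)
        by_cases h : j = i <;> simp [h])]
      rw [Finset.sum_ite_eq Finset.univ j (fun i => -(ε - x i))]
      simp only [Finset.mem_univ, if_true]
      ring
    rw [← hx_eq]
    exact Finset.centerMass_mem_convexHull _ hwnn (by rw [hsum]; norm_num) hzmem
  have hint : (0 : Fin d → ℝ) ∈ interior (GammaOC P Q) :=
    interior_maximal hsub Metric.isOpen_ball (Metric.mem_ball_self hε)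
  refine ⟨hint, ?_⟩
  have h1 : affineSpan ℝ (GammaOC P Q) = affineSpan ℝ S := affineSpan_convexHull S
  rw [h1]
  exact affineSpan_eq_top_of_nonempty_interior ⟨0, hint⟩
end

section
/- Let P and Q be finite posets with |P| = |Q| = d. Then the polytope Γ(C(P), −C(Q)) = conv({ρ(A) : A ∈ A(P)} ∪ {−ρ(B) : B ∈ A(Q)}) is a Fano polytope: the origin is the unique lattice point in its interior. -/
open Set MeasureTheory Pointwise

lemma ac_singleton {d : ℕ} (P : PartialOrder (Fin d)) (i : Fin d) :
    IsAC P {i} := by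
  intro a ha b hb hne
  simp only [Finset.mem_singleton] at ha hb
  exact absurd (ha.trans hb.symm) hne

lemma ac_empty {d : ℕ} (P : PartialOrder (Fin d)) : IsAC P ∅ := by
  intro a ha; simp at ha

lemma l1ball_subset {d : ℕ} (P Q : PartialOrder (Fin d)) :
    {x : Fin d → ℝ | ∑ i, |x i| < 1} ⊆ GammaCC P Q := by
  intro x hx
  simp only [Set.mem_setOf_eq] at hx
  set w : Option (Fin d) → ℝ := fun o => o.elim (1 - ∑ i, |x i|) (fun i => |x i|) with hwdef
  set z : Option (Fin d) → (Fin d → ℝ) :=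
    fun o => o.elim 0 (fun i => if 0 ≤ x i then rho {i} else -(rho {i})) with hzdef
  have hw : ∀ o ∈ (Finset.univ : Finset (Option (Fin d))), 0 ≤ w o := by
    rintro (_ | i) -
    · simp only [hwdef, Option.elim]; linarith
    · exact abs_nonneg _
  have hws : ∑ o : Option (Fin d), w o = 1 := by
    rw [Fintype.sum_option]; simp [hwdef]
  have hz : ∀ o ∈ (Finset.univ : Finset (Option (Fin d))),
      z o ∈ acVerts P ∪ (fun v => -v) '' acVerts Q := by
    rintro (_ | i) -
    · left
      exact ⟨∅, ac_empty P, by funext j; show (0:ℝ) = rho ∅ j; simp [rho]⟩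
    · simp only [hzdef, Option.elim]
      split
      · left; exact ⟨{i}, ac_singleton P i, rfl⟩
      · right; exact ⟨rho {i}, ⟨{i}, ac_singleton Q i, rfl⟩, rfl⟩
  have hmem := Finset.centerMass_mem_convexHull Finset.univ hw
    (by rw [hws]; norm_num) hz
  rw [Finset.centerMass_eq_of_sum_1 _ _ hws] at hmem
  have hx_eq : x = ∑ o : Option (Fin d), w o • z o := by
    funext j
    rw [Finset.sum_apply, Fintype.sum_option]
    have h0 : (w none • z none) j = 0 := by
      have hz0 : z none j = 0 := rfl
      rw [Pi.smul_apply, hz0, smul_zero]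
    rw [h0, zero_add]
    have hterm : ∀ i : Fin d, (w (some i) • z (some i)) j
        = |x i| * ((if 0 ≤ x i then rho {i} else -(rho {i})) j) := fun i => rfl
    rw [Finset.sum_congr rfl (fun i _ => hterm i)]
    rw [Finset.sum_eq_single j]
    · have h1 : rho ({j} : Finset (Fin d)) j = 1 := by simp [rho]
      rcases le_or_gt 0 (x j) with h | h
      · rw [if_pos h, h1, abs_of_nonneg h, mul_one]
      · rw [if_neg (not_le.mpr h), Pi.neg_apply, h1, abs_of_neg h]; ring
    · intro i _ hij
      have h0i : rho ({i} : Finset (Fin d)) j = 0 := by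
        simp only [rho, Finset.mem_singleton]
        rw [if_neg]; intro h; exact hij h.symm
      split_ifs <;> simp [h0i]
    · intro h; exact absurd (Finset.mem_univ j) h
  rw [hx_eq]
  exact hmem

lemma gamma_subset_box {d : ℕ} (P Q : PartialOrder (Fin d)) :
    GammaCC P Q ⊆ Set.pi Set.univ (fun _ : Fin d => Set.Icc (-1:ℝ) 1) := by
  apply convexHull_min _ (convex_pi fun _ _ => convex_Icc _ _)
  rintro y (⟨A, -, rfl⟩ | ⟨v, ⟨A, -, rfl⟩, rfl⟩) i -
  · simp only [rho]; split <;> norm_num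
  · simp only [Pi.neg_apply, rho]; split <;> norm_num

lemma interior_strict {d : ℕ} (P Q : PartialOrder (Fin d)) :
    ∀ x ∈ interior (GammaCC P Q), ∀ i, |x i| < 1 := by
  intro x hx i
  by_contra hcon
  push_neg at hcon
  obtain ⟨ε, εpos, hball⟩ := Metric.isOpen_iff.1 isOpen_interior x hx
  set u : Fin d → ℝ := if 0 ≤ x i then rho {i} else -(rho {i}) with hu
  have hnorm1 : ‖rho ({i} : Finset (Fin d))‖ ≤ 1 := by
    apply pi_norm_le_iff_of_nonneg (by norm_num) |>.2
    intro j
    simp only [rho]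
    split <;> simp
  have hnorm : ‖u‖ ≤ 1 := by
    rw [hu]; split
    · exact hnorm1
    · rw [norm_neg]; exact hnorm1
  have hy : x + (ε/2) • u ∈ Metric.ball x ε := by
    rw [Metric.mem_ball, dist_eq_norm]
    have : x + (ε/2) • u - x = (ε/2) • u := by ring_nf
    rw [this, norm_smul]
    have : ‖(ε/2 : ℝ)‖ = ε/2 := by
      rw [Real.norm_eq_abs, abs_of_pos (by linarith)]
    rw [this]
    nlinarith
  have hyS := gamma_subset_box P Q (interior_subset (hball hy))
  have hyi := hyS i (Set.mem_univ i)
  simp only [Set.mem_Icc, Pi.add_apply, Pi.smul_apply, smul_eq_mul] at hyi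
  have hui : u i = if 0 ≤ x i then 1 else -1 := by
    rw [hu]
    have : rho ({i} : Finset (Fin d)) i = 1 := by simp [rho]
    split <;> simp [this]
  rw [hui] at hyi
  rcases le_or_gt 0 (x i) with h | h
  · rw [abs_of_nonneg h] at hcon
    simp only [if_pos h, mul_one] at hyi
    linarith [hyi.2]
  · rw [abs_of_neg h] at hcon
    simp only [if_neg (not_le.mpr h)] at hyi
    have := hyi.1
    nlinarith

theorem statement6 {d : ℕ} (P Q : PartialOrder (Fin d)) :
    (0 : Fin d → ℝ) ∈ interior (GammaCC P Q) ∧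
    ∀ x ∈ interior (GammaCC P Q), IsLatticePt x → x = 0 := by
  constructor
  · apply interior_maximal (l1ball_subset P Q)
    · exact isOpen_lt (continuous_finset_sum _ fun i _ => (continuous_apply i).abs)
        continuous_const
    · simp
  · intro x hx hlat
    funext i
    obtain ⟨z, hz⟩ := hlat i
    have h1 : |x i| < 1 := interior_strict P Q x hx i
    rw [hz] at h1
    have h2 : |z| < 1 := by exact_mod_cast h1
    rw [abs_lt] at h2
    have hz0 : z = 0 := by omega
    rw [hz, hz0]
    simp
end

section
/- Let P and Q be finite posets with |P| = |Q| = d. Then Γ(C(P), −C(Q)) is a normal polytope: for every positive integer N, every lattice point of N·Γ(C(P), −C(Q)) is a sum of N lattice points of Γ(C(P), −C(Q)). -/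
open Set MeasureTheory Pointwise

lemma chain_decomp {d : ℕ} (P : PartialOrder (Fin d)) (b : Fin d → ℕ) (M : ℕ)
    (hM : ∀ c : Finset (Fin d), (∀ x ∈ c, ∀ y ∈ c, P.le x y ∨ P.le y x) → ∑ i ∈ c, b i ≤ M) :
    ∃ g : ℕ → Finset (Fin d), (∀ k, IsAC P (g k)) ∧ (∀ k, M ≤ k → g k = ∅) ∧
      ∀ i, b i = ∑ k ∈ Finset.range M, (if i ∈ g k then 1 else 0) := by
  classical
  set C : Fin d → Finset (Finset (Fin d)) := fun i =>
    Finset.univ.powerset.filter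
      (fun c => (∀ x ∈ c, ∀ y ∈ c, P.le x y ∨ P.le y x) ∧ ∀ j ∈ c, P.le j i) with hC
  set f : Fin d → ℕ := fun i => (C i).sup (fun c => ∑ j ∈ c, b j) with hf
  have hCne : ∀ i, (C i).Nonempty := by
    intro i
    refine ⟨∅, ?_⟩
    simp [hC]
  have hfle : ∀ i, f i ≤ M := by
    intro i
    apply Finset.sup_le
    intro c hc
    simp only [hC, Finset.mem_filter] at hc
    exact hM c hc.2.1
  have hbf : ∀ i, b i ≤ f i := by
    intro i
    have h1 : ({i} : Finset (Fin d)) ∈ C i := by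
      simp only [hC, Finset.mem_filter, Finset.mem_powerset, Finset.subset_univ, true_and,
        Finset.mem_singleton]
      constructor
      · rintro x rfl y rfl; exact Or.inl (P.le_refl _)
      · rintro j rfl; exact P.le_refl _
    have := Finset.le_sup (f := fun c => ∑ j ∈ c, b j) h1
    simpa using this
  have hmono : ∀ i j, P.le i j → i ≠ j → f i + b j ≤ f j := by
    intro i j hij hne
    obtain ⟨c, hc, hceq⟩ := Finset.exists_mem_eq_sup (C i) (hCne i) (fun c => ∑ j ∈ c, b j)
    simp only [hC, Finset.mem_filter, Finset.mem_powerset] at hc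
    have hjc : j ∉ c := by
      intro hjmem
      exact hne (P.le_antisymm i j hij (hc.2.2 j hjmem))
    have hins : insert j c ∈ C j := by
      simp only [hC, Finset.mem_filter, Finset.mem_powerset, Finset.subset_univ, true_and]
      have hle : ∀ x ∈ insert j c, P.le x j := by
        intro x hx
        rcases Finset.mem_insert.mp hx with h | h
        · subst h; exact P.le_refl x
        · exact P.le_trans _ _ _ (hc.2.2 x h) hij
      refine ⟨?_, hle⟩
      intro x hx y hy
      rcases Finset.mem_insert.mp hx with h | h
      · subst h; exact Or.inr (hle y hy)
      · rcases Finset.mem_insert.mp hy with h' | h'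
        · subst h'; exact Or.inl (hle x hx)
        · exact hc.2.1 x h y h'
    have h3 : ∑ u ∈ insert j c, b u ≤ f j := by
      have h4 := Finset.le_sup (f := fun s => ∑ u ∈ s, b u) hins
      simpa [hf] using h4
    rw [Finset.sum_insert hjc] at h3
    have hfi : f i = ∑ u ∈ c, b u := by simp only [hf]; exact hceq
    omega
  refine ⟨fun k => Finset.univ.filter (fun i => f i - b i ≤ k ∧ k < f i), ?_, ?_, ?_⟩
  · intro k i hi j hj hne
    simp only [Finset.mem_filter, Finset.mem_univ, true_and] at hi hj
    constructor
    · intro h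
      have := hmono i j h hne
      omega
    · intro h
      have := hmono j i h (Ne.symm hne)
      omega
  · intro k hk
    ext i
    simp only [Finset.mem_filter, Finset.mem_univ, true_and, Finset.notMem_empty, iff_false]
    have := hfle i
    omega
  · intro i
    have h1 : ∑ k ∈ Finset.range M, (if i ∈ Finset.univ.filter
        (fun i => f i - b i ≤ k ∧ k < f i) then 1 else 0)
        = ((Finset.range M).filter (fun k => f i - b i ≤ k ∧ k < f i)).card := by
      rw [Finset.card_filter]
      apply Finset.sum_congr rfl
      intro k _
      simp
    rw [h1]
    have h2 : (Finset.range M).filter (fun k => f i - b i ≤ k ∧ k < f i)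
        = Finset.Ico (f i - b i) (f i) := by
      ext k
      simp only [Finset.mem_filter, Finset.mem_range, Finset.mem_Ico]
      have := hfle i
      omega
    rw [h2, Nat.card_Ico]
    have := hbf i
    omega

lemma rho_nonneg {d : ℕ} (A : Finset (Fin d)) (i : Fin d) : 0 ≤ rho A i := by
  unfold rho; split <;> norm_num

lemma sum_rho_le_one {d : ℕ} (P : PartialOrder (Fin d)) {A c : Finset (Fin d)}
    (hA : IsAC P A) (hc : ∀ x ∈ c, ∀ y ∈ c, P.le x y ∨ P.le y x) :
    ∑ i ∈ c, rho A i ≤ 1 := by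
  classical
  have h1 : ∑ i ∈ c, rho A i = ((c.filter (· ∈ A)).card : ℝ) := by
    rw [Finset.card_filter]
    push_cast
    apply Finset.sum_congr rfl
    intro i _
    simp [rho]
  rw [h1]
  have hcard : (c.filter (· ∈ A)).card ≤ 1 := by
    rw [Finset.card_le_one]
    intro x hx y hy
    simp only [Finset.mem_filter] at hx hy
    by_contra hne
    rcases hc x hx.1 y hy.1 with h | h
    · exact (hA x hx.2 y hy.2 hne).1 h
    · exact (hA x hx.2 y hy.2 hne).2 h
  exact_mod_cast hcard

lemma gamma_chain_bound {d : ℕ} (P Q : PartialOrder (Fin d)) (c₁ c₂ : Finset (Fin d))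
    (hc₁ : ∀ x ∈ c₁, ∀ y ∈ c₁, P.le x y ∨ P.le y x)
    (hc₂ : ∀ x ∈ c₂, ∀ y ∈ c₂, Q.le x y ∨ Q.le y x)
    {x : Fin d → ℝ} (hx : x ∈ GammaCC P Q) :
    ∑ i ∈ c₁, max (x i) 0 + ∑ j ∈ c₂, max (-x j) 0 ≤ 1 := by
  classical
  have hsub : GammaCC P Q ⊆ {y | ∑ i ∈ c₁, max (y i) 0 + ∑ j ∈ c₂, max (-y j) 0 ≤ 1} := by
    apply convexHull_min
    · rintro y (⟨A, hA, rfl⟩ | ⟨v, ⟨B, hB, rfl⟩, rfl⟩)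
      · have h1 : ∑ i ∈ c₁, max (rho A i) 0 = ∑ i ∈ c₁, rho A i :=
          Finset.sum_congr rfl fun i _ => max_eq_left (rho_nonneg A i)
        have h2 : ∑ j ∈ c₂, max (-rho A j) 0 = 0 := by
          apply Finset.sum_eq_zero
          intro j _
          exact max_eq_right (neg_nonpos.mpr (rho_nonneg A j))
        simp only [mem_setOf_eq, h1, h2, add_zero]
        exact sum_rho_le_one P hA hc₁
      · have h1 : ∑ i ∈ c₁, max ((-rho B) i) 0 = 0 := by
          apply Finset.sum_eq_zero
          intro i _
          exact max_eq_right (by simpa using neg_nonpos.mpr (rho_nonneg B i))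
        have h2 : ∑ j ∈ c₂, max (-(-rho B) j) 0 = ∑ j ∈ c₂, rho B j := by
          apply Finset.sum_congr rfl
          intro j _
          simp [max_eq_left (rho_nonneg B j)]
        simp only [mem_setOf_eq, h1, h2, zero_add]
        exact sum_rho_le_one Q hB hc₂
    · intro p hp q hq s t hs ht hst
      simp only [mem_setOf_eq] at hp hq ⊢
      have key : ∀ u v : ℝ, max (s * u + t * v) 0 ≤ s * max u 0 + t * max v 0 := by
        intro u v
        apply max_le
        · exact add_le_add (mul_le_mul_of_nonneg_left (le_max_left u 0) hs)
            (mul_le_mul_of_nonneg_left (le_max_left v 0) ht)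
        · positivity
      have hA : ∑ i ∈ c₁, max ((s • p + t • q) i) 0
          ≤ s * (∑ i ∈ c₁, max (p i) 0) + t * (∑ i ∈ c₁, max (q i) 0) := by
        rw [Finset.mul_sum, Finset.mul_sum, ← Finset.sum_add_distrib]
        apply Finset.sum_le_sum
        intro i _
        simpa using key (p i) (q i)
      have hB : ∑ j ∈ c₂, max (-(s • p + t • q) j) 0
          ≤ s * (∑ j ∈ c₂, max (-p j) 0) + t * (∑ j ∈ c₂, max (-q j) 0) := by
        rw [Finset.mul_sum, Finset.mul_sum, ← Finset.sum_add_distrib]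
        apply Finset.sum_le_sum
        intro j _
        have := key (-p j) (-q j)
        simp only [Pi.neg_apply, Pi.add_apply, Pi.smul_apply, smul_eq_mul, mul_neg] at this ⊢
        convert this using 2
        case e'_2 => rfl
        ring
      nlinarith [mul_le_mul_of_nonneg_left hp hs, mul_le_mul_of_nonneg_left hq ht]
  exact hsub hx
theorem statement7 {d : ℕ} (P Q : PartialOrder (Fin d)) :
    ∀ N : ℕ, 0 < N → ∀ a ∈ dil N (GammaCC P Q), IsLatticePt a →
      ∃ f : Fin N → (Fin d → ℝ),
        (∀ k, f k ∈ GammaCC P Q ∧ IsLatticePt (f k)) ∧ a = ∑ k, f k := by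
  intro N hN a ha haL
  classical
  obtain ⟨x, hxΓ, hax⟩ := Set.mem_smul_set.mp ha
  choose z hz using haL
  set bp : Fin d → ℕ := fun i => (z i).toNat with hbp
  set bm : Fin d → ℕ := fun i => (-z i).toNat with hbm
  have hzi : ∀ i, a i = (z i : ℝ) := hz
  have hbpR : ∀ i, (bp i : ℝ) = max (a i) 0 := by
    intro i
    rw [hzi i, hbp]
    rw [show ((z i).toNat : ℝ) = (((z i).toNat : ℤ) : ℝ) by push_cast; ring]
    rw [Int.toNat_eq_max]
    push_cast
    rfl
  have hbmR : ∀ i, (bm i : ℝ) = max (-a i) 0 := by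
    intro i
    rw [hzi i, hbm]
    rw [show (((-z i).toNat : ℝ)) = ((((-z i).toNat : ℤ)) : ℝ) by push_cast; ring]
    rw [Int.toNat_eq_max]
    push_cast
    rfl
  -- set of all chains
  set CP : Finset (Finset (Fin d)) := Finset.univ.powerset.filter
    (fun c => ∀ x ∈ c, ∀ y ∈ c, P.le x y ∨ P.le y x) with hCP
  set CQ : Finset (Finset (Fin d)) := Finset.univ.powerset.filter
    (fun c => ∀ x ∈ c, ∀ y ∈ c, Q.le x y ∨ Q.le y x) with hCQ
  have hCPne : CP.Nonempty := ⟨∅, by simp [hCP]⟩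
  have hCQne : CQ.Nonempty := ⟨∅, by simp [hCQ]⟩
  set M₁ : ℕ := CP.sup (fun c => ∑ i ∈ c, bp i) with hM₁
  set M₂ : ℕ := CQ.sup (fun c => ∑ i ∈ c, bm i) with hM₂
  have hM1le : ∀ c : Finset (Fin d), (∀ x ∈ c, ∀ y ∈ c, P.le x y ∨ P.le y x) →
      ∑ i ∈ c, bp i ≤ M₁ := by
    intro c hc
    have hcmem : c ∈ CP := by
      rw [hCP, Finset.mem_filter, Finset.mem_powerset]
      exact ⟨Finset.subset_univ c, hc⟩
    have h5 := Finset.le_sup (f := fun c => ∑ i ∈ c, bp i) hcmem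
    simpa [hM₁] using h5
  have hM2le : ∀ c : Finset (Fin d), (∀ x ∈ c, ∀ y ∈ c, Q.le x y ∨ Q.le y x) →
      ∑ i ∈ c, bm i ≤ M₂ := by
    intro c hc
    have hcmem : c ∈ CQ := by
      rw [hCQ, Finset.mem_filter, Finset.mem_powerset]
      exact ⟨Finset.subset_univ c, hc⟩
    have h5 := Finset.le_sup (f := fun c => ∑ i ∈ c, bm i) hcmem
    simpa [hM₂] using h5
  -- M₁ + M₂ ≤ N
  obtain ⟨c₁, hc₁mem, hc₁eq⟩ := Finset.exists_mem_eq_sup CP hCPne (fun c => ∑ i ∈ c, bp i)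
  obtain ⟨c₂, hc₂mem, hc₂eq⟩ := Finset.exists_mem_eq_sup CQ hCQne (fun c => ∑ i ∈ c, bm i)
  simp only [hCP, Finset.mem_filter, Finset.mem_powerset] at hc₁mem
  simp only [hCQ, Finset.mem_filter, Finset.mem_powerset] at hc₂mem
  have hbound := gamma_chain_bound P Q c₁ c₂ hc₁mem.2 hc₂mem.2 hxΓ
  have hMN : M₁ + M₂ ≤ N := by
    have hNbound : ∑ i ∈ c₁, max (a i) 0 + ∑ j ∈ c₂, max (-a j) 0 ≤ (N : ℝ) := by
      have h1 : ∀ i, max (a i) 0 = (N : ℝ) * max (x i) 0 := by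
        intro i
        rw [← hax]
        simp only [Pi.smul_apply, smul_eq_mul]
        rw [mul_max_of_nonneg _ _ (by positivity : (0:ℝ) ≤ (N:ℝ)), mul_zero]
      have h2 : ∀ j, max (-a j) 0 = (N : ℝ) * max (-x j) 0 := by
        intro j
        rw [← hax]
        simp only [Pi.smul_apply, smul_eq_mul, ← mul_neg]
        rw [mul_max_of_nonneg _ _ (by positivity : (0:ℝ) ≤ (N:ℝ)), mul_zero]
      calc ∑ i ∈ c₁, max (a i) 0 + ∑ j ∈ c₂, max (-a j) 0
          = (N : ℝ) * (∑ i ∈ c₁, max (x i) 0 + ∑ j ∈ c₂, max (-x j) 0) := by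
            rw [mul_add, Finset.mul_sum, Finset.mul_sum]
            congr 1
            · exact Finset.sum_congr rfl fun i _ => h1 i
            · exact Finset.sum_congr rfl fun j _ => h2 j
        _ ≤ (N : ℝ) * 1 := by
            apply mul_le_mul_of_nonneg_left hbound (by positivity)
        _ = (N : ℝ) := mul_one _
    have hcast : ((M₁ + M₂ : ℕ) : ℝ) ≤ (N : ℝ) := by
      rw [Nat.cast_add, hM₁, hM₂, hc₁eq, hc₂eq]
      push_cast
      calc (∑ i ∈ c₁, (bp i : ℝ)) + ∑ j ∈ c₂, (bm j : ℝ)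
          = ∑ i ∈ c₁, max (a i) 0 + ∑ j ∈ c₂, max (-a j) 0 := by
            congr 1
            · exact Finset.sum_congr rfl fun i _ => hbpR i
            · exact Finset.sum_congr rfl fun j _ => hbmR j
        _ ≤ (N : ℝ) := hNbound
    exact_mod_cast hcast
  obtain ⟨g, hgAC, hg0, hgsum⟩ := chain_decomp P bp M₁ hM1le
  obtain ⟨h, hhAC, hh0, hhsum⟩ := chain_decomp Q bm M₂ hM2le
  set F : ℕ → (Fin d → ℝ) := fun k => if k < M₁ then rho (g k) else -(rho (h (k - M₁))) with hF
  refine ⟨fun k => F k.val, ?_, ?_⟩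
  · intro k
    constructor
    · show F (k : ℕ) ∈ GammaCC P Q
      by_cases hk : (k : ℕ) < M₁
      · have hFk : F k.val = rho (g k.val) := by simp only [hF]; rw [if_pos hk]
        rw [hFk]
        exact subset_convexHull ℝ _ (Or.inl ⟨g k.val, hgAC _, rfl⟩)
      · have hFk : F k.val = -(rho (h (k.val - M₁))) := by simp only [hF]; rw [if_neg hk]
        rw [hFk]
        exact subset_convexHull ℝ _ (Or.inr ⟨rho (h (k.val - M₁)),
          ⟨h (k.val - M₁), hhAC _, rfl⟩, rfl⟩)
    · show IsLatticePt (F (k : ℕ))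
      intro i
      by_cases hk : (k : ℕ) < M₁
      · refine ⟨if i ∈ g k.val then 1 else 0, ?_⟩
        have hFk : F k.val = rho (g k.val) := by simp only [hF]; rw [if_pos hk]
        rw [hFk]
        simp only [rho]
        split <;> norm_num
      · refine ⟨if i ∈ h (k.val - M₁) then -1 else 0, ?_⟩
        have hFk : F k.val = -(rho (h (k.val - M₁))) := by simp only [hF]; rw [if_neg hk]
        rw [hFk]
        simp only [rho, Pi.neg_apply]
        split <;> norm_num
  · funext i
    simp only [Finset.sum_apply]
    have hsum1 : ∑ k : Fin N, F k.val i = ∑ k ∈ Finset.range N, F k i :=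
      Fin.sum_univ_eq_sum_range (fun k => F k i) N
    rw [hsum1]
    have hsplit : ∑ k ∈ Finset.range N, F k i
        = ∑ k ∈ Finset.range M₁, F k i + ∑ k ∈ Finset.Ico M₁ N, F k i := by
      rw [Finset.range_eq_Ico, ← Finset.sum_Ico_consecutive _ (Nat.zero_le M₁) (by omega),
        ← Finset.range_eq_Ico]
    rw [hsplit]
    have hpart1 : ∑ k ∈ Finset.range M₁, F k i = (bp i : ℝ) := by
      have : ∀ k ∈ Finset.range M₁, F k i = ((if i ∈ g k then 1 else 0 : ℕ) : ℝ) := by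
        intro k hk
        simp only [Finset.mem_range] at hk
        simp only [hF, hk, if_true, rho]
        split <;> norm_num
      rw [Finset.sum_congr rfl this, ← Nat.cast_sum, ← hgsum i]
    have hpart2 : ∑ k ∈ Finset.Ico M₁ N, F k i = -(bm i : ℝ) := by
      rw [Finset.sum_Ico_eq_sum_range]
      have hterm : ∀ k, F (M₁ + k) i = -((if i ∈ h k then 1 else 0 : ℕ) : ℝ) := by
        intro k
        have hnlt : ¬ (M₁ + k < M₁) := by omega
        simp only [hF, hnlt, if_false, Nat.add_sub_cancel_left, Pi.neg_apply, rho]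
        split <;> norm_num
      rw [Finset.sum_congr rfl (fun k _ => hterm k)]
      rw [Finset.sum_neg_distrib, ← Nat.cast_sum]
      have hsub : ∑ k ∈ Finset.range (N - M₁), (if i ∈ h k then 1 else 0 : ℕ)
          = ∑ k ∈ Finset.range M₂, (if i ∈ h k then 1 else 0 : ℕ) := by
        symm
        apply Finset.sum_subset
        · apply Finset.range_subset_range.mpr
          omega
        · intro k _ hk
          simp only [Finset.mem_range, not_lt] at hk
          rw [hh0 k hk]
          simp
      rw [hsub, ← hhsum i]
    rw [hpart1, hpart2, hzi i]
    have : z i = ((bp i : ℤ)) - ((bm i : ℤ)) := by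
      simp only [hbp, hbm]
      omega
    rw [this]
    push_cast
    ring
end
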